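/- arXiv:1511.05434 — 7 statements merged into one kernel-verified Lean document; each statement's English description precedes it below -/
import Mathlib

section
/- For n ≥ 2 and 1 ≤ i ≤ n-1, the number of permutations π of {1,...,n} such that the position of i in π is immediately followed by a larger value and the position of i+1 is immediately followed by a smaller value (with the convention π(n+1) = n+1) equals (i-1)(n-2)! + (n-i)(n-2)! + (n-i)(i-1)(n-2)!. -/
open Finset Equiv
open scoped Classical

/-- Value of the permutation at position `k ∈ [1,n]`, with values in `[1,n]`,
and the convention that positions outside `[1,n]` (in particular `n+1`) get value `n+1`. -/
def pval (n : ℕ) (π : Equiv.Perm (Fin n)) (k : ℕ) : ℕ :=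
  if h : k - 1 < n ∧ 1 ≤ k then ((π ⟨k - 1, h.1⟩ : Fin n) : ℕ) + 1 else n + 1

lemma fixcount {n k : ℕ} (x f : Fin k ↪ Fin n) :
    Fintype.card {π : Equiv.Perm (Fin n) // ∀ j, π (x j) = f j} = (n - k).factorial := by
  classical
  set e0 : (Set.range x) ≃ (Set.range f) :=
    (Equiv.ofInjective x x.injective).symm.trans (Equiv.ofInjective f f.injective) with he0
  have h1 : {π : Equiv.Perm (Fin n) // ∀ j, π (x j) = f j} ≃
      {e : Fin n ≃ Fin n // ∀ y : Set.range x, e y = e0 y} := by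
    apply Equiv.subtypeEquivRight; intro π
    constructor
    · rintro h ⟨y, j, rfl⟩; simpa [he0, Equiv.ofInjective_symm_apply] using h j
    · intro h j; have := h ⟨x j, ⟨j, rfl⟩⟩
      simpa [he0, Equiv.ofInjective_symm_apply] using this
  rw [Fintype.card_congr (h1.trans (Equiv.Set.compl e0))]
  have hx : Fintype.card (Set.range x) = k := by rw [Set.card_range_of_injective x.injective, Fintype.card_fin]
  have hf : Fintype.card (Set.range f) = k := by rw [Set.card_range_of_injective f.injective, Fintype.card_fin]
  have hcc : Fintype.card ((Set.range x)ᶜ : Set (Fin n)) = n - k := by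
    rw [Fintype.card_compl_set, hx, Fintype.card_fin]
  have hcc' : Fintype.card ((Set.range f)ᶜ : Set (Fin n)) = n - k := by
    rw [Fintype.card_compl_set, hf, Fintype.card_fin]
  rw [Fintype.card_equiv (Fintype.equivOfCardEq (by rw [hcc, hcc'])), hcc]

lemma countM {n k : ℕ} (x : Fin k ↪ Fin n) (S : Fin k → Finset (Fin n))
    (hS : ∀ ⦃j1 j2⦄, j1 ≠ j2 → Disjoint (S j1) (S j2)) :
    (univ.filter (fun π : Equiv.Perm (Fin n) => ∀ j, π (x j) ∈ S j)).card
      = (∏ j, (S j).card) * (n - k).factorial := by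
  classical
  rw [Finset.card_eq_sum_card_fiberwise
    (f := fun (π : Equiv.Perm (Fin n)) (j : Fin k) => π (x j)) (t := Fintype.piFinset S)
    (by intro π hπ; simp only [Finset.mem_coe, mem_filter] at hπ; exact Fintype.mem_piFinset.2 hπ.2)]
  have key : ∀ f ∈ Fintype.piFinset S,
      ((univ.filter (fun π : Equiv.Perm (Fin n) => ∀ j, π (x j) ∈ S j)).filter
        (fun π => (fun j => π (x j)) = f)).card = (n - k).factorial := by
    intro f hf
    have hfS : ∀ j, f j ∈ S j := Fintype.mem_piFinset.1 hf
    have hfinj : Function.Injective f := by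
      intro j1 j2 h
      by_contra hne
      exact (Finset.disjoint_left.1 (hS hne) (hfS j1)) (h ▸ hfS j2)
    have : ((univ.filter (fun π : Equiv.Perm (Fin n) => ∀ j, π (x j) ∈ S j)).filter
        (fun π => (fun j => π (x j)) = f))
        = univ.filter (fun π : Equiv.Perm (Fin n) => ∀ j, π (x j) = f j) := by
      ext π
      simp only [mem_filter, mem_univ, true_and, funext_iff]
      constructor
      · rintro ⟨_, h2⟩; exact h2
      · intro h; exact ⟨fun j => (h j) ▸ hfS j, h⟩
    rw [this, ← Fintype.card_subtype]
    exact fixcount x ⟨f, hfinj⟩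
  rw [Finset.sum_congr rfl key, Finset.sum_const, Fintype.card_piFinset, smul_eq_mul]

lemma count2 {n : ℕ} (x0 x1 : Fin n) (h01 : x0 ≠ x1)
    (S0 S1 : Finset (Fin n)) (d01 : Disjoint S0 S1) :
    (univ.filter (fun π : Equiv.Perm (Fin n) => π x0 ∈ S0 ∧ π x1 ∈ S1)).card
      = S0.card * S1.card * (n - 2).factorial := by
  have hinj : Function.Injective ![x0, x1] := by
    intro a b hab
    fin_cases a <;> fin_cases b <;> simp_all
  have := countM (n := n) ⟨![x0, x1], hinj⟩ ![S0, S1] (by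
    intro j1 j2 hne
    fin_cases j1 <;> fin_cases j2 <;> simp_all [d01.symm])
  simpa [Fin.forall_fin_two, Fin.prod_univ_two] using this

lemma count3 {n : ℕ} (x0 x1 x2 : Fin n) (h01 : x0 ≠ x1) (h02 : x0 ≠ x2) (h12 : x1 ≠ x2)
    (S0 S1 S2 : Finset (Fin n)) (d01 : Disjoint S0 S1) (d02 : Disjoint S0 S2)
    (d12 : Disjoint S1 S2) :
    (univ.filter (fun π : Equiv.Perm (Fin n) => π x0 ∈ S0 ∧ π x1 ∈ S1 ∧ π x2 ∈ S2)).card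
      = S0.card * S1.card * S2.card * (n - 3).factorial := by
  have hinj : Function.Injective ![x0, x1, x2] := by
    intro a b hab
    fin_cases a <;> fin_cases b <;> simp_all
  have := countM (n := n) ⟨![x0, x1, x2], hinj⟩ ![S0, S1, S2] (by
    intro j1 j2 hne
    fin_cases j1 <;> fin_cases j2 <;> simp_all [d01.symm, d02.symm, d12.symm])
  simpa [Fin.forall_fin_succ, Fin.forall_fin_two, Fin.prod_univ_three, mul_assoc] using this

lemma count4 {n : ℕ} (x0 x1 x2 x3 : Fin n) (h01 : x0 ≠ x1) (h02 : x0 ≠ x2) (h03 : x0 ≠ x3)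
    (h12 : x1 ≠ x2) (h13 : x1 ≠ x3) (h23 : x2 ≠ x3)
    (S0 S1 S2 S3 : Finset (Fin n)) (d01 : Disjoint S0 S1) (d02 : Disjoint S0 S2)
    (d03 : Disjoint S0 S3) (d12 : Disjoint S1 S2) (d13 : Disjoint S1 S3)
    (d23 : Disjoint S2 S3) :
    (univ.filter (fun π : Equiv.Perm (Fin n) =>
      π x0 ∈ S0 ∧ π x1 ∈ S1 ∧ π x2 ∈ S2 ∧ π x3 ∈ S3)).card
      = S0.card * S1.card * S2.card * S3.card * (n - 4).factorial := by
  have hinj : Function.Injective ![x0, x1, x2, x3] := by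
    intro a b hab
    fin_cases a <;> fin_cases b <;> simp_all
  have := countM (n := n) ⟨![x0, x1, x2, x3], hinj⟩ ![S0, S1, S2, S3] (by
    intro j1 j2 hne
    fin_cases j1 <;> fin_cases j2 <;>
      simp_all [d01.symm, d02.symm, d03.symm, d12.symm, d13.symm, d23.symm])
  simpa [Fin.forall_fin_succ, Fin.forall_fin_two, Fin.prod_univ_four, mul_assoc] using this

lemma pval_pos {n : ℕ} (π : Equiv.Perm (Fin n)) (s : ℕ) (h : s < n) :
    pval n π (s + 1) = (π ⟨s, h⟩ : ℕ) + 1 := by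
  simp [pval, h]

lemma pval_big {n : ℕ} (π : Equiv.Perm (Fin n)) (k : ℕ) (h : n < k) :
    pval n π k = n + 1 := by
  have : ¬ (k - 1 < n ∧ 1 ≤ k) := by omega
  simp [pval, this]

/-- The clean reformulated condition. -/
def Qp (n i : ℕ) (h0 : i - 1 < n) (h1 : i < n) (π : Equiv.Perm (Fin n)) : Prop :=
  i < pval n π ((π.symm ⟨i - 1, h0⟩ : ℕ) + 2) ∧
    pval n π ((π.symm ⟨i, h1⟩ : ℕ) + 2) < i + 1

lemma P_iff_Q (n i : ℕ) (hi1 : 1 ≤ i) (h0 : i - 1 < n) (h1 : i < n)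
    (π : Equiv.Perm (Fin n)) :
    (∀ t, 1 ≤ t → t ≤ n →
        (pval n π t = i → pval n π t < pval n π (t + 1)) ∧
        (pval n π t = i + 1 → pval n π (t + 1) < pval n π t)) ↔ Qp n i h0 h1 π := by
  constructor
  · intro hP
    constructor
    · -- ascent condition at p
      set p := π.symm ⟨i - 1, h0⟩ with hp
      have hπp : π p = ⟨i - 1, h0⟩ := Equiv.apply_symm_apply _ _
      have hv : pval n π ((p : ℕ) + 1) = i := by
        rw [pval_pos π p p.isLt]
        simp [hπp]
        omega
      have h2 := (hP ((p : ℕ) + 1) (by omega) (by have := p.isLt; omega)).1 hv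
      rw [hv] at h2
      exact h2
    · set q := π.symm ⟨i, h1⟩ with hq
      have hπq : π q = ⟨i, h1⟩ := Equiv.apply_symm_apply _ _
      have hv : pval n π ((q : ℕ) + 1) = i + 1 := by
        rw [pval_pos π q q.isLt]
        simp [hπq]
      have h2 := (hP ((q : ℕ) + 1) (by omega) (by have := q.isLt; omega)).2 hv
      rw [hv] at h2
      exact h2
  · intro hQ t ht1 ht2
    obtain ⟨s, rfl⟩ : ∃ s, t = s + 1 := ⟨t - 1, by omega⟩
    have hs : s < n := by omega
    rw [pval_pos π s hs]
    have e1 : pval n π (s + 1 + 1) = pval n π (s + 2) := rfl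
    constructor
    · intro hval
      have hπs : π ⟨s, hs⟩ = ⟨i - 1, h0⟩ := by
        apply Fin.ext; simp; omega
      have hsym : π.symm ⟨i - 1, h0⟩ = ⟨s, hs⟩ := by
        rw [← hπs, Equiv.symm_apply_apply]
      have h2 := hQ.1
      rw [hsym] at h2
      have e2 : ((⟨s, hs⟩ : Fin n) : ℕ) = s := rfl
      rw [e2] at h2
      omega
    · intro hval
      have hπs : π ⟨s, hs⟩ = ⟨i, h1⟩ := by
        apply Fin.ext; simp; omega
      have hsym : π.symm ⟨i, h1⟩ = ⟨s, hs⟩ := by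
        rw [← hπs, Equiv.symm_apply_apply]
      have h2 := hQ.2
      rw [hsym] at h2
      have e2 : ((⟨s, hs⟩ : Fin n) : ℕ) = s := rfl
      rw [e2] at h2
      omega

/-- fiber value function -/
def G (n i a b : ℕ) : ℕ :=
  if b + 1 = n ∨ a = b then 0
  else if b = a + 1 then (i - 1) * (n - 3).factorial
  else if a = b + 1 then
    (if a + 1 = n then (n - 2).factorial else (n - 1 - i) * (n - 3).factorial)
  else if a + 1 = n then (i - 1) * (n - 3).factorial
  else (i - 1) * (n - 1 - i) * (n - 4).factorial

set_option maxHeartbeats 1000000 in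
lemma fiber_card (n i : ℕ) (hi1 : 1 ≤ i) (hi2 : i ≤ n - 1) (hn : 2 ≤ n)
    (h0 : i - 1 < n) (h1 : i < n) (p q : Fin n) :
    (univ.filter (fun π : Equiv.Perm (Fin n) =>
        Qp n i h0 h1 π ∧ (π.symm ⟨i-1,h0⟩, π.symm ⟨i,h1⟩) = (p, q))).card
      = G n i (p : ℕ) (q : ℕ) := by
  classical
  set i0 : Fin n := ⟨i-1, h0⟩ with hi0def
  set i1 : Fin n := ⟨i, h1⟩ with hi1def
  have vi0 : (i0 : ℕ) = i - 1 := rfl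
  have vi1 : (i1 : ℕ) = i := rfl
  have pairiff : ∀ π : Equiv.Perm (Fin n),
      ((π.symm i0, π.symm i1) = (p, q)) ↔ (π p = i0 ∧ π q = i1) := by
    intro π
    rw [Prod.mk.injEq]
    constructor
    · rintro ⟨ha, hb⟩; rw [← ha, ← hb]; simp
    · rintro ⟨ha, hb⟩; rw [← ha, ← hb]; simp
  by_cases hqn : (q : ℕ) + 1 = n
  · have hG : G n i (p : ℕ) (q : ℕ) = 0 := by simp [G, hqn]
    rw [hG, Finset.card_eq_zero, Finset.filter_eq_empty_iff]
    rintro π - ⟨hQ, hpair⟩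
    obtain ⟨hp, hq⟩ := (pairiff π).1 hpair
    have sq : π.symm i1 = q := by rw [← hq]; simp
    have h2 := hQ.2
    rw [sq, pval_big π _ (by omega)] at h2
    omega
  · -- q+1 < n
    have hq2 : (q : ℕ) + 1 < n := by have := q.isLt; omega
    set r1 : Fin n := ⟨(q : ℕ) + 1, hq2⟩ with hr1def
    by_cases hpq : p = q
    · have hG : G n i (p : ℕ) (q : ℕ) = 0 := by simp [G, hpq]
      rw [hG, Finset.card_eq_zero, Finset.filter_eq_empty_iff]
      rintro π - ⟨hQ, hpair⟩
      obtain ⟨hp, hq⟩ := (pairiff π).1 hpair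
      rw [hpq, hq] at hp
      have : (i1 : ℕ) = (i0 : ℕ) := by rw [hp]
      rw [vi0, vi1] at this; omega
    · have hpqv : (p : ℕ) ≠ (q : ℕ) := fun h => hpq (Fin.ext h)
      by_cases hA : (q : ℕ) = (p : ℕ) + 1
      · -- case A : q = p+1, block [i0, i1], need π r1 ∈ Small
        have hG : G n i (p : ℕ) (q : ℕ) = (i - 1) * (n - 3).factorial := by
          unfold G; rw [if_neg (by omega), if_pos hA]
        rw [hG]
        have key : (univ.filter (fun π : Equiv.Perm (Fin n) =>
            Qp n i h0 h1 π ∧ (π.symm ⟨i-1,h0⟩, π.symm ⟨i,h1⟩) = (p, q)))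
            = univ.filter (fun π : Equiv.Perm (Fin n) =>
              π p ∈ ({i0} : Finset (Fin n)) ∧ π q ∈ ({i1} : Finset (Fin n)) ∧ π r1 ∈ Iio i0) := by
          apply Finset.filter_congr; intro π _
          constructor
          · rintro ⟨hQ, hpair⟩
            obtain ⟨hp, hq⟩ := (pairiff π).1 hpair
            have sq : π.symm i1 = q := by rw [← hq]; simp
            have h2 := hQ.2
            rw [hi1def] at sq
            rw [sq] at h2
            have e2 : pval n π ((q:ℕ)+2) = (π r1 : ℕ) + 1 := pval_pos π ((q:ℕ)+1) hq2
            rw [e2] at h2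
            have hne : π r1 ≠ i0 := by
              intro h
              have h' : r1 = p := π.injective (by rw [h, hp])
              have : (r1 : ℕ) = (p:ℕ) := by rw [h']
              simp only [hr1def] at this
              omega
            have hv : (π r1 : ℕ) ≠ i - 1 := fun h => hne (Fin.ext (by rw [h, vi0]))
            refine ⟨by simp [hp], by simp [hq], ?_⟩
            rw [Finset.mem_Iio, Fin.lt_def, vi0]
            omega
          · rintro ⟨hp, hq, hr⟩
            rw [Finset.mem_singleton] at hp hq
            rw [Finset.mem_Iio, Fin.lt_def, vi0] at hr
            refine ⟨?_, (pairiff π).2 ⟨hp, hq⟩⟩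
            constructor
            · have sp : π.symm i0 = p := by rw [← hp]; simp
              rw [hi0def] at sp
              rw [sp]
              have hpn : (p:ℕ)+1 < n := by omega
              have e1 : pval n π ((p:ℕ)+2) = (π ⟨(p:ℕ)+1, hpn⟩ : ℕ) + 1 :=
                pval_pos π ((p:ℕ)+1) hpn
              rw [e1]
              have hq' : (⟨(p:ℕ)+1, hpn⟩ : Fin n) = q := Fin.ext (by simp; omega)
              rw [hq', hq, vi1]
              omega
            · have sq : π.symm i1 = q := by rw [← hq]; simp
              rw [hi1def] at sq
              rw [sq]
              have e2 : pval n π ((q:ℕ)+2) = (π r1 : ℕ) + 1 := pval_pos π ((q:ℕ)+1) hq2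
              rw [e2]
              omega
        rw [key, count3 p q r1 hpq (by simp [Fin.ext_iff, hr1def] <;> omega)
          (by simp [Fin.ext_iff, hr1def])
          _ _ _ (by simp [Fin.ext_iff] <;> omega)
          (by simp [Finset.disjoint_singleton_left, Finset.mem_Iio])
          (by simp [Finset.disjoint_singleton_left, Finset.mem_Iio, Fin.lt_def, vi0, vi1] <;> omega)]
        rw [Fin.card_Iio]
        simp [vi0]
      · by_cases hB : (p:ℕ) = (q:ℕ) + 1
        · have hr1p : r1 = p := Fin.ext (by simp only [hr1def]; omega)
          by_cases hpn : (p:ℕ) + 1 = n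
          · have hG : G n i (p : ℕ) (q : ℕ) = (n-2).factorial := by
              unfold G; rw [if_neg (by omega), if_neg (by omega), if_pos hB, if_pos hpn]
            rw [hG]
            have key : (univ.filter (fun π : Equiv.Perm (Fin n) =>
                Qp n i h0 h1 π ∧ (π.symm ⟨i-1,h0⟩, π.symm ⟨i,h1⟩) = (p, q)))
                = univ.filter (fun π : Equiv.Perm (Fin n) =>
                  π q ∈ ({i1} : Finset (Fin n)) ∧ π p ∈ ({i0} : Finset (Fin n))) := by
              apply Finset.filter_congr; intro π _
              constructor
              · rintro ⟨hQ, hpair⟩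
                obtain ⟨hp, hq⟩ := (pairiff π).1 hpair
                exact ⟨by simp [hq], by simp [hp]⟩
              · rintro ⟨hq, hp⟩
                rw [Finset.mem_singleton] at hp hq
                refine ⟨⟨?_, ?_⟩, (pairiff π).2 ⟨hp, hq⟩⟩
                · have sp : π.symm ⟨i-1,h0⟩ = p := by rw [← hi0def, ← hp]; simp
                  rw [sp, pval_big π _ (by omega)]
                  omega
                · have sq : π.symm ⟨i,h1⟩ = q := by rw [← hi1def, ← hq]; simp
                  rw [sq]
                  have e2 : pval n π ((q:ℕ)+2) = (π r1 : ℕ) + 1 := pval_pos π ((q:ℕ)+1) hq2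
                  rw [e2, hr1p, hp, vi0]
                  omega
            rw [key, count2 q p (fun h => hpq h.symm) _ _
              (by simp [Finset.disjoint_singleton_left, Fin.ext_iff] <;> omega)]
            simp
          · have hpn2 : (p:ℕ) + 1 < n := by have := p.isLt; omega
            set r0 : Fin n := ⟨(p:ℕ)+1, hpn2⟩ with hr0def
            have hG : G n i (p : ℕ) (q : ℕ) = (n-1-i) * (n-3).factorial := by
              unfold G; rw [if_neg (by omega), if_neg (by omega), if_pos hB, if_neg hpn]
            rw [hG]
            have key : (univ.filter (fun π : Equiv.Perm (Fin n) =>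
                Qp n i h0 h1 π ∧ (π.symm ⟨i-1,h0⟩, π.symm ⟨i,h1⟩) = (p, q)))
                = univ.filter (fun π : Equiv.Perm (Fin n) =>
                  π q ∈ ({i1} : Finset (Fin n)) ∧ π p ∈ ({i0} : Finset (Fin n))
                    ∧ π r0 ∈ Ioi i1) := by
              apply Finset.filter_congr; intro π _
              constructor
              · rintro ⟨hQ, hpair⟩
                obtain ⟨hp, hq⟩ := (pairiff π).1 hpair
                have sp : π.symm ⟨i-1,h0⟩ = p := by rw [← hi0def, ← hp]; simp
                have hQ1 := hQ.1
                rw [sp] at hQ1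
                have e1 : pval n π ((p:ℕ)+2) = (π r0 : ℕ) + 1 := pval_pos π ((p:ℕ)+1) hpn2
                rw [e1] at hQ1
                have hne : π r0 ≠ i1 := by
                  intro h
                  have h' : r0 = q := π.injective (by rw [h, hq])
                  have : (r0 : ℕ) = (q:ℕ) := by rw [h']
                  simp only [hr0def] at this
                  omega
                have hv : (π r0 : ℕ) ≠ i := fun h => hne (Fin.ext (by rw [h, vi1]))
                refine ⟨by simp [hq], by simp [hp], ?_⟩
                rw [Finset.mem_Ioi, Fin.lt_def, vi1]
                omega
              · rintro ⟨hq, hp, hr⟩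
                rw [Finset.mem_singleton] at hp hq
                rw [Finset.mem_Ioi, Fin.lt_def, vi1] at hr
                refine ⟨⟨?_, ?_⟩, (pairiff π).2 ⟨hp, hq⟩⟩
                · have sp : π.symm ⟨i-1,h0⟩ = p := by rw [← hi0def, ← hp]; simp
                  rw [sp]
                  have e1 : pval n π ((p:ℕ)+2) = (π r0 : ℕ) + 1 := pval_pos π ((p:ℕ)+1) hpn2
                  rw [e1]
                  omega
                · have sq : π.symm ⟨i,h1⟩ = q := by rw [← hi1def, ← hq]; simp
                  rw [sq]
                  have e2 : pval n π ((q:ℕ)+2) = (π r1 : ℕ) + 1 := pval_pos π ((q:ℕ)+1) hq2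
                  rw [e2, hr1p, hp, vi0]
                  omega
            rw [key, count3 q p r0 (fun h => hpq h.symm)
              (by simp [Fin.ext_iff, hr0def] <;> omega)
              (by simp [Fin.ext_iff, hr0def] <;> omega) _ _ _
              (by simp [Finset.disjoint_singleton_left, Fin.ext_iff] <;> omega)
              (by simp [Finset.disjoint_singleton_left, Finset.mem_Ioi])
              (by simp [Finset.disjoint_singleton_left, Finset.mem_Ioi, Fin.lt_def, vi0, vi1] <;> omega)]
            rw [Fin.card_Ioi]
            simp [vi1]
        · -- generic case
          by_cases hpn : (p:ℕ) + 1 = n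
          · have hG : G n i (p : ℕ) (q : ℕ) = (i-1) * (n-3).factorial := by
              unfold G; rw [if_neg (by omega), if_neg (by omega), if_neg (by omega), if_pos hpn]
            rw [hG]
            have key : (univ.filter (fun π : Equiv.Perm (Fin n) =>
                Qp n i h0 h1 π ∧ (π.symm ⟨i-1,h0⟩, π.symm ⟨i,h1⟩) = (p, q)))
                = univ.filter (fun π : Equiv.Perm (Fin n) =>
                  π p ∈ ({i0} : Finset (Fin n)) ∧ π q ∈ ({i1} : Finset (Fin n))
                    ∧ π r1 ∈ Iio i0) := by
              apply Finset.filter_congr; intro π _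
              constructor
              · rintro ⟨hQ, hpair⟩
                obtain ⟨hp, hq⟩ := (pairiff π).1 hpair
                have sq : π.symm ⟨i,h1⟩ = q := by rw [← hi1def, ← hq]; simp
                have hQ2 := hQ.2
                rw [sq] at hQ2
                have e2 : pval n π ((q:ℕ)+2) = (π r1 : ℕ) + 1 := pval_pos π ((q:ℕ)+1) hq2
                rw [e2] at hQ2
                have hne : π r1 ≠ i0 := by
                  intro h
                  have h' : r1 = p := π.injective (by rw [h, hp])
                  have : (r1 : ℕ) = (p:ℕ) := by rw [h']
                  simp only [hr1def] at this
                  omega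
                have hv : (π r1 : ℕ) ≠ i - 1 := fun h => hne (Fin.ext (by rw [h, vi0]))
                refine ⟨by simp [hp], by simp [hq], ?_⟩
                rw [Finset.mem_Iio, Fin.lt_def, vi0]
                omega
              · rintro ⟨hp, hq, hr⟩
                rw [Finset.mem_singleton] at hp hq
                rw [Finset.mem_Iio, Fin.lt_def, vi0] at hr
                refine ⟨⟨?_, ?_⟩, (pairiff π).2 ⟨hp, hq⟩⟩
                · have sp : π.symm ⟨i-1,h0⟩ = p := by rw [← hi0def, ← hp]; simp
                  rw [sp, pval_big π _ (by omega)]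
                  omega
                · have sq : π.symm ⟨i,h1⟩ = q := by rw [← hi1def, ← hq]; simp
                  rw [sq]
                  have e2 : pval n π ((q:ℕ)+2) = (π r1 : ℕ) + 1 := pval_pos π ((q:ℕ)+1) hq2
                  rw [e2]
                  omega
            rw [key, count3 p q r1 hpq
              (by simp [Fin.ext_iff, hr1def] <;> omega)
              (by simp [Fin.ext_iff, hr1def] <;> omega) _ _ _
              (by simp [Finset.disjoint_singleton_left, Fin.ext_iff] <;> omega)
              (by simp [Finset.disjoint_singleton_left, Finset.mem_Iio])
              (by simp [Finset.disjoint_singleton_left, Finset.mem_Iio, Fin.lt_def, vi0, vi1] <;> omega)]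
            rw [Fin.card_Iio]
            simp [vi0]
          · have hpn2 : (p:ℕ) + 1 < n := by have := p.isLt; omega
            set r0 : Fin n := ⟨(p:ℕ)+1, hpn2⟩ with hr0def
            have hG : G n i (p : ℕ) (q : ℕ) = (i-1) * (n-1-i) * (n-4).factorial := by
              unfold G
              rw [if_neg (by omega), if_neg (by omega), if_neg (by omega), if_neg hpn]
            rw [hG]
            have key : (univ.filter (fun π : Equiv.Perm (Fin n) =>
                Qp n i h0 h1 π ∧ (π.symm ⟨i-1,h0⟩, π.symm ⟨i,h1⟩) = (p, q)))
                = univ.filter (fun π : Equiv.Perm (Fin n) =>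
                  π p ∈ ({i0} : Finset (Fin n)) ∧ π q ∈ ({i1} : Finset (Fin n))
                    ∧ π r0 ∈ Ioi i1 ∧ π r1 ∈ Iio i0) := by
              apply Finset.filter_congr; intro π _
              constructor
              · rintro ⟨hQ, hpair⟩
                obtain ⟨hp, hq⟩ := (pairiff π).1 hpair
                have sp : π.symm ⟨i-1,h0⟩ = p := by rw [← hi0def, ← hp]; simp
                have sq : π.symm ⟨i,h1⟩ = q := by rw [← hi1def, ← hq]; simp
                have hQ1 := hQ.1
                have hQ2 := hQ.2
                rw [sp] at hQ1
                rw [sq] at hQ2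
                have e1 : pval n π ((p:ℕ)+2) = (π r0 : ℕ) + 1 := pval_pos π ((p:ℕ)+1) hpn2
                have e2 : pval n π ((q:ℕ)+2) = (π r1 : ℕ) + 1 := pval_pos π ((q:ℕ)+1) hq2
                rw [e1] at hQ1
                rw [e2] at hQ2
                have hne0 : π r0 ≠ i1 := by
                  intro h
                  have h' : r0 = q := π.injective (by rw [h, hq])
                  have : (r0 : ℕ) = (q:ℕ) := by rw [h']
                  simp only [hr0def] at this
                  omega
                have hv0 : (π r0 : ℕ) ≠ i := fun h => hne0 (Fin.ext (by rw [h, vi1]))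
                have hne1 : π r1 ≠ i0 := by
                  intro h
                  have h' : r1 = p := π.injective (by rw [h, hp])
                  have : (r1 : ℕ) = (p:ℕ) := by rw [h']
                  simp only [hr1def] at this
                  omega
                have hv1 : (π r1 : ℕ) ≠ i - 1 := fun h => hne1 (Fin.ext (by rw [h, vi0]))
                refine ⟨by simp [hp], by simp [hq], ?_, ?_⟩
                · rw [Finset.mem_Ioi, Fin.lt_def, vi1]; omega
                · rw [Finset.mem_Iio, Fin.lt_def, vi0]; omega
              · rintro ⟨hp, hq, hr0m, hr1m⟩
                rw [Finset.mem_singleton] at hp hq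
                rw [Finset.mem_Ioi, Fin.lt_def, vi1] at hr0m
                rw [Finset.mem_Iio, Fin.lt_def, vi0] at hr1m
                refine ⟨⟨?_, ?_⟩, (pairiff π).2 ⟨hp, hq⟩⟩
                · have sp : π.symm ⟨i-1,h0⟩ = p := by rw [← hi0def, ← hp]; simp
                  rw [sp]
                  have e1 : pval n π ((p:ℕ)+2) = (π r0 : ℕ) + 1 := pval_pos π ((p:ℕ)+1) hpn2
                  rw [e1]
                  omega
                · have sq : π.symm ⟨i,h1⟩ = q := by rw [← hi1def, ← hq]; simp
                  rw [sq]
                  have e2 : pval n π ((q:ℕ)+2) = (π r1 : ℕ) + 1 := pval_pos π ((q:ℕ)+1) hq2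
                  rw [e2]
                  omega
            rw [key, count4 p q r0 r1 hpq
              (by simp [Fin.ext_iff, hr0def] <;> omega)
              (by simp [Fin.ext_iff, hr1def] <;> omega)
              (by simp [Fin.ext_iff, hr0def] <;> omega)
              (by simp [Fin.ext_iff, hr1def] <;> omega)
              (by simp [Fin.ext_iff, hr0def, hr1def] <;> omega) _ _ _ _
              (by simp [Finset.disjoint_singleton_left, Fin.ext_iff] <;> omega)
              (by simp [Finset.disjoint_singleton_left, Finset.mem_Ioi, Fin.lt_def, vi0, vi1] <;> omega)
              (by simp [Finset.disjoint_singleton_left, Finset.mem_Iio])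
              (by simp [Finset.disjoint_singleton_left, Finset.mem_Ioi])
              (by simp [Finset.disjoint_singleton_left, Finset.mem_Iio, Fin.lt_def, vi0, vi1] <;> omega)
              (by rw [Finset.disjoint_left]
                  intro v hv1 hv2
                  rw [Finset.mem_Ioi, Fin.lt_def, vi1] at hv1
                  rw [Finset.mem_Iio, Fin.lt_def, vi0] at hv2
                  omega)]
            rw [Fin.card_Ioi, Fin.card_Iio, vi0, vi1, Finset.card_singleton,
              Finset.card_singleton]
            ring

lemma row_zero (n i b : ℕ) (hb : b + 1 = n) : ∑ a ∈ range n, G n i a b = 0 := by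
  apply Finset.sum_eq_zero; intro a _; unfold G; rw [if_pos (Or.inl hb)]

lemma row2 (n i b : ℕ) (hb2 : b + 2 < n) :
    ∑ a ∈ range n, G n i a b
      = (if 1 ≤ b then (i - 1) * (n - 3).factorial else 0)
        + (n - 1 - i) * (n - 3).factorial + (i - 1) * (n - 3).factorial
        + (n - 3 - (if 1 ≤ b then 1 else 0)) * ((i - 1) * (n - 1 - i) * (n - 4).factorial) := by
  by_cases hb : 1 ≤ b
  · rw [if_pos hb, if_pos hb]
    set s : Finset ℕ := {b - 1, b, b + 1, n - 1} with hs
    have hsub : s ⊆ range n := by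
      intro a ha
      simp only [hs, Finset.mem_insert, Finset.mem_singleton] at ha
      rw [Finset.mem_range]; omega
    rw [← Finset.sum_sdiff hsub]
    have g1 : G n i (b - 1) b = (i - 1) * (n - 3).factorial := by
      unfold G; rw [if_neg (by omega), if_pos (by omega)]
    have g2 : G n i b b = 0 := by unfold G; rw [if_pos (by omega)]
    have g3 : G n i (b + 1) b = (n - 1 - i) * (n - 3).factorial := by
      unfold G; rw [if_neg (by omega), if_neg (by omega), if_pos rfl, if_neg (by omega)]
    have g4 : G n i (n - 1) b = (i - 1) * (n - 3).factorial := by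
      unfold G; rw [if_neg (by omega), if_neg (by omega), if_neg (by omega), if_pos (by omega)]
    have e1 : ∑ a ∈ s, G n i a b
        = (i - 1) * (n - 3).factorial + (0 + ((n - 1 - i) * (n - 3).factorial
            + (i - 1) * (n - 3).factorial)) := by
      rw [hs]
      rw [Finset.sum_insert (by simp only [Finset.mem_insert, Finset.mem_singleton, not_or]; omega), Finset.sum_insert (by simp only [Finset.mem_insert, Finset.mem_singleton, not_or]; omega),
        Finset.sum_insert (by simp only [Finset.mem_insert, Finset.mem_singleton, not_or]; omega), Finset.sum_singleton]
      rw [g1, g2, g3, g4]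
    have grest : ∀ a ∈ range n \ s, G n i a b
        = (i - 1) * (n - 1 - i) * (n - 4).factorial := by
      intro a ha
      simp only [hs, Finset.mem_sdiff, Finset.mem_range, Finset.mem_insert,
        Finset.mem_singleton, not_or] at ha
      obtain ⟨han, h1, h2, h3, h4⟩ := ha
      unfold G
      rw [if_neg (by omega), if_neg (by omega), if_neg (by omega), if_neg (by omega)]
    rw [Finset.sum_congr rfl grest, Finset.sum_const, smul_eq_mul]
    have hcard : (range n \ s).card = n - 4 := by
      rw [Finset.card_sdiff_of_subset hsub, Finset.card_range]
      have : s.card = 4 := by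
        rw [hs]
        rw [Finset.card_insert_of_notMem (by simp only [Finset.mem_insert, Finset.mem_singleton, not_or]; omega),
          Finset.card_insert_of_notMem (by simp only [Finset.mem_insert, Finset.mem_singleton, not_or]; omega),
          Finset.card_insert_of_notMem (by simp only [Finset.mem_insert, Finset.mem_singleton, not_or]; omega), Finset.card_singleton]
      rw [this]
    rw [hcard, e1]
    have h34 : n - 3 - 1 = n - 4 := by omega
    rw [h34]
    omega
  · have hb0 : b = 0 := by omega
    subst hb0
    rw [if_neg hb, if_neg hb]
    set s : Finset ℕ := {0, 1, n - 1} with hs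
    have hsub : s ⊆ range n := by
      intro a ha
      simp only [hs, Finset.mem_insert, Finset.mem_singleton] at ha
      rw [Finset.mem_range]; omega
    rw [← Finset.sum_sdiff hsub]
    have g2 : G n i 0 0 = 0 := by unfold G; rw [if_pos (by omega)]
    have g3 : G n i 1 0 = (n - 1 - i) * (n - 3).factorial := by
      unfold G; rw [if_neg (by omega), if_neg (by omega), if_pos rfl, if_neg (by omega)]
    have g4 : G n i (n - 1) 0 = (i - 1) * (n - 3).factorial := by
      unfold G; rw [if_neg (by omega), if_neg (by omega), if_neg (by omega), if_pos (by omega)]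
    have e1 : ∑ a ∈ s, G n i a 0
        = 0 + ((n - 1 - i) * (n - 3).factorial + (i - 1) * (n - 3).factorial) := by
      rw [hs, Finset.sum_insert (by simp only [Finset.mem_insert, Finset.mem_singleton, not_or]; omega), Finset.sum_insert (by simp only [Finset.mem_insert, Finset.mem_singleton, not_or]; omega),
        Finset.sum_singleton, g2, g3, g4]
    have grest : ∀ a ∈ range n \ s, G n i a 0
        = (i - 1) * (n - 1 - i) * (n - 4).factorial := by
      intro a ha
      simp only [hs, Finset.mem_sdiff, Finset.mem_range, Finset.mem_insert,
        Finset.mem_singleton, not_or] at ha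
      obtain ⟨han, h1, h2, h3⟩ := ha
      unfold G
      rw [if_neg (by omega), if_neg (by omega), if_neg (by omega), if_neg (by omega)]
    rw [Finset.sum_congr rfl grest, Finset.sum_const, smul_eq_mul]
    have hcard : (range n \ s).card = n - 3 := by
      rw [Finset.card_sdiff_of_subset hsub, Finset.card_range]
      have : s.card = 3 := by
        rw [hs, Finset.card_insert_of_notMem (by simp only [Finset.mem_insert, Finset.mem_singleton, not_or]; omega),
          Finset.card_insert_of_notMem (by simp only [Finset.mem_insert, Finset.mem_singleton, not_or]; omega), Finset.card_singleton]
      rw [this]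
    rw [hcard, e1]
    have h30 : n - 3 - 0 = n - 3 := by omega
    rw [h30]
    omega

lemma row1 (n i b : ℕ) (hb2 : b + 2 = n) (hb : 1 ≤ b) :
    ∑ a ∈ range n, G n i a b
      = (i - 1) * (n - 3).factorial + (n - 2).factorial
        + (n - 3) * ((i - 1) * (n - 1 - i) * (n - 4).factorial) := by
  set s : Finset ℕ := {b - 1, b, b + 1} with hs
  have hsub : s ⊆ range n := by
    intro a ha
    simp only [hs, Finset.mem_insert, Finset.mem_singleton] at ha
    rw [Finset.mem_range]; omega
  rw [← Finset.sum_sdiff hsub]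
  have g1 : G n i (b - 1) b = (i - 1) * (n - 3).factorial := by
    unfold G; rw [if_neg (by omega), if_pos (by omega)]
  have g2 : G n i b b = 0 := by unfold G; rw [if_pos (by omega)]
  have g3 : G n i (b + 1) b = (n - 2).factorial := by
    unfold G; rw [if_neg (by omega), if_neg (by omega), if_pos rfl, if_pos (by omega)]
  have e1 : ∑ a ∈ s, G n i a b
      = (i - 1) * (n - 3).factorial + (0 + (n - 2).factorial) := by
    rw [hs, Finset.sum_insert (by simp only [Finset.mem_insert, Finset.mem_singleton, not_or]; omega), Finset.sum_insert (by simp only [Finset.mem_insert, Finset.mem_singleton, not_or]; omega),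
      Finset.sum_singleton]
    simp only [g1, g2, g3]
  have grest : ∀ a ∈ range n \ s, G n i a b
      = (i - 1) * (n - 1 - i) * (n - 4).factorial := by
    intro a ha
    simp only [hs, Finset.mem_sdiff, Finset.mem_range, Finset.mem_insert,
      Finset.mem_singleton, not_or] at ha
    obtain ⟨han, h1, h2, h3⟩ := ha
    unfold G
    rw [if_neg (by omega), if_neg (by omega), if_neg (by omega), if_neg (by omega)]
  rw [Finset.sum_congr rfl grest, Finset.sum_const, smul_eq_mul]
  have hcard : (range n \ s).card = n - 3 := by
    rw [Finset.card_sdiff_of_subset hsub, Finset.card_range]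
    have hs3 : s.card = 3 := by
      rw [hs]
      rw [Finset.card_insert_of_notMem (by simp only [Finset.mem_insert, Finset.mem_singleton, not_or]; omega)]
      rw [Finset.card_insert_of_notMem (by simp only [Finset.mem_insert, Finset.mem_singleton, not_or]; omega)]
      rw [Finset.card_singleton]
    rw [hs3]
  rw [hcard, e1]
  omega

lemma sum_G (n i : ℕ) (hn : 2 ≤ n) (hi1 : 1 ≤ i) (hi2 : i ≤ n - 1) :
    ∑ b ∈ range n, ∑ a ∈ range n, G n i a b
      = (i - 1) * (n - 2).factorial + (n - i) * (n - 2).factorial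
        + (n - i) * (i - 1) * (n - 2).factorial := by
  rcases Nat.lt_or_ge n 3 with h3 | h3
  · have hn2 : n = 2 := by omega
    subst hn2
    have hi : i = 1 := by omega
    subst hi
    decide
  · obtain ⟨m, rfl⟩ : ∃ m, n = m + 3 := ⟨n - 3, by omega⟩
    rw [show m + 3 = (m + 2) + 1 from rfl, Finset.sum_range_succ,
      row_zero _ _ _ (by omega)]
    rw [show m + 2 = (m + 1) + 1 from rfl, Finset.sum_range_succ,
      row1 _ _ _ (by omega) (by omega)]
    -- remaining : ∑ b in range (m+1), row2 value
    have hrow : ∀ b ∈ range (m + 1), ∑ a ∈ range (m + 3), G (m + 3) i a b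
        = (if 1 ≤ b then (i - 1) * m.factorial else 0)
          + (m + 2 - i) * m.factorial + (i - 1) * m.factorial
          + (m - (if 1 ≤ b then 1 else 0)) * ((i - 1) * (m + 2 - i) * (m - 1).factorial) := by
      intro b hb
      rw [Finset.mem_range] at hb
      have c1 : m + 3 - 3 = m := by omega
      have c2 : m + 3 - 1 - i = m + 2 - i := by omega
      have c3 : m + 3 - 4 = m - 1 := by omega
      have c4 : m + 3 - 2 = m + 1 := by omega
      rw [row2 (m + 3) i b (by omega), c1, c2, c3]
    rw [Finset.sum_congr rfl hrow, Finset.sum_range_succ']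
    have hterm : ∀ b ∈ range m,
        ((if 1 ≤ b + 1 then (i - 1) * m.factorial else 0)
          + (m + 2 - i) * m.factorial + (i - 1) * m.factorial
          + (m - (if 1 ≤ b + 1 then 1 else 0)) * ((i - 1) * (m + 2 - i) * (m - 1).factorial))
        = (i - 1) * m.factorial + (m + 2 - i) * m.factorial + (i - 1) * m.factorial
          + (m - 1) * ((i - 1) * (m + 2 - i) * (m - 1).factorial) := by
      intro b _
      rw [if_pos (by omega), if_pos (by omega)]
    rw [Finset.sum_congr rfl hterm, Finset.sum_const, smul_eq_mul, Finset.card_range]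
    rw [if_neg (by omega), if_neg (by omega)]
    rcases Nat.eq_zero_or_pos m with hm | hm
    · subst hm
      norm_num
      interval_cases i <;> norm_num [Nat.factorial]
    · obtain ⟨k, rfl⟩ : ∃ k, m = k + 1 := ⟨m - 1, by omega⟩
      have e1 : k + 1 + 1 + 1 + 1 - 3 = k + 1 := by omega
      have e2 : k + 1 + 1 + 1 + 1 - 2 = k + 2 := by omega
      have e3 : k + 1 + 1 + 1 + 1 - 4 = k := by omega
      have e4 : k + 1 + 1 + 1 + 1 - 1 - i = k + 3 - i := by omega
      have e5 : k + 1 - 1 = k := by omega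
      have e6 : k + 1 - 0 = k + 1 := by omega
      have e7 : k + 1 + 2 - i = k + 3 - i := by omega
      have e8 : k + 1 + 1 + 1 + 1 - i = k + 4 - i := by omega
      rw [e1, e2, e3, e4, e5, e6, e7, e8]
      have f2 : (k+2).factorial = (k+2) * ((k+1) * k.factorial) := by
        rw [show k+2 = (k+1)+1 from rfl, Nat.factorial_succ, Nat.factorial_succ]
      have f1 : (k+1).factorial = (k+1) * k.factorial := Nat.factorial_succ k
      rw [f2, f1]
      zify [hi1, (show i ≤ k + 3 by omega), (show i ≤ k + 4 by omega)]
      ring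

theorem stmt0 (n i : ℕ) (hn : 2 ≤ n) (hi1 : 1 ≤ i) (hi2 : i ≤ n - 1) :
    Nat.card {π : Equiv.Perm (Fin n) //
      ∀ t, 1 ≤ t → t ≤ n →
        (pval n π t = i → pval n π t < pval n π (t + 1)) ∧
        (pval n π t = i + 1 → pval n π (t + 1) < pval n π t)} =
    (i - 1) * Nat.factorial (n - 2) + (n - i) * Nat.factorial (n - 2) + (n - i) * (i - 1) * Nat.factorial (n - 2) := by
  classical
  have h0 : i - 1 < n := by omega
  have h1 : i < n := by omega
  rw [Nat.card_eq_fintype_card,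
    Fintype.card_congr (Equiv.subtypeEquivRight (fun π => P_iff_Q n i hi1 h0 h1 π)),
    Fintype.card_subtype]
  rw [Finset.card_eq_sum_card_fiberwise
    (f := fun π : Equiv.Perm (Fin n) => ((Equiv.symm π) ⟨i-1,h0⟩, (Equiv.symm π) ⟨i,h1⟩))
    (t := (univ ×ˢ univ : Finset (Fin n × Fin n))) (fun π _ => by simp)]
  rw [Finset.sum_product]
  have step : ∀ p q : Fin n, ((univ.filter (Qp n i h0 h1)).filter
      (fun π => ((Equiv.symm π) ⟨i-1,h0⟩, (Equiv.symm π) ⟨i,h1⟩) = (p, q))).card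
      = G n i (p : ℕ) (q : ℕ) := by
    intro p q
    rw [Finset.filter_filter]
    exact fiber_card n i hi1 hi2 hn h0 h1 p q
  have e0 : ∀ p : Fin n, ∑ q : Fin n, ((univ.filter (Qp n i h0 h1)).filter
      (fun π => ((Equiv.symm π) ⟨i-1,h0⟩, (Equiv.symm π) ⟨i,h1⟩) = (p, q))).card
      = ∑ b ∈ range n, G n i (p : ℕ) b := by
    intro p
    rw [Finset.sum_congr rfl (fun q _ => step p q)]
    exact Fin.sum_univ_eq_sum_range (fun b => G n i (p : ℕ) b) n
  rw [Finset.sum_congr rfl (fun p _ => e0 p),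
    Fin.sum_univ_eq_sum_range (fun a => ∑ b ∈ range n, G n i a b) n,
    Finset.sum_comm]
  exact sum_G n i hn hi1 hi2
end

section
/- For n ≥ 2, the sum over all permutations π of {1,...,n} of the number of indices i with 1 ≤ i ≤ n-1 such that i is an ascent of π and i+1 is a descent of π (with the convention π(n+1) = n+1) equals (n-1)! · (n² + 4n - 6)/6. -/
open Classical

/-- The value `i` is an ascent of `π`: at the position `t` where `π` takes value `i`,
the next value is larger (with the convention `π(n+1) = n+1`). -/
def IsAscVal (n : ℕ) (π : Equiv.Perm (Fin n)) (i : ℕ) : Prop :=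
  ∀ t, 1 ≤ t → t ≤ n → pval n π t = i → pval n π t < pval n π (t + 1)

/-- The value `i` is a descent of `π`. -/
def IsDescVal (n : ℕ) (π : Equiv.Perm (Fin n)) (i : ℕ) : Prop :=
  ∀ t, 1 ≤ t → t ≤ n → pval n π t = i → pval n π (t + 1) < pval n π t

open Finset


theorem card_perm_fix {n k : ℕ} (p v : Fin k → Fin n) (hp : Function.Injective p)
    (hv : Function.Injective v) :
    (Finset.univ.filter (fun π : Equiv.Perm (Fin n) => ∀ j, π (p j) = v j)).card
      = Nat.factorial (n - k) := by
  classical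
  rw [← Fintype.card_subtype]
  let e₀ : (Set.range p) ≃ (Set.range v) :=
    (Equiv.ofInjective p hp).symm.trans (Equiv.ofInjective v hv)
  have he₀ : ∀ j (h : p j ∈ Set.range p), (e₀ ⟨p j, h⟩ : Fin n) = v j := by
    intro j h
    have hx : (⟨p j, h⟩ : Set.range p) = Equiv.ofInjective p hp j := by
      apply Subtype.ext; rfl
    rw [hx]
    show (Equiv.ofInjective v hv ((Equiv.ofInjective p hp).symm (Equiv.ofInjective p hp j)) : Fin n) = v j
    rw [Equiv.symm_apply_apply]
    rfl
  have e2 : {π : Equiv.Perm (Fin n) // ∀ j, π (p j) = v j}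
      ≃ {e : Fin n ≃ Fin n // ∀ x : Set.range p, e x = e₀ x} := by
    apply Equiv.subtypeEquivRight
    intro π
    constructor
    · rintro h ⟨x, j, rfl⟩
      simp [h j, he₀]
      exact (he₀ j _).symm
    · intro h j
      have := h ⟨p j, Set.mem_range_self j⟩
      simpa [he₀] using this
  rw [Fintype.card_congr (e2.trans (Equiv.Set.compl e₀))]
  have hc1 : Fintype.card ((Set.range p)ᶜ : Set (Fin n)) = n - k := by
    rw [Fintype.card_compl_set]
    simp [Set.card_range_of_injective hp]
  have hc2 : Fintype.card ((Set.range v)ᶜ : Set (Fin n)) = n - k := by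
    rw [Fintype.card_compl_set]
    simp [Set.card_range_of_injective hv]
  rw [Fintype.card_equiv (Fintype.equivOfCardEq (hc1.trans hc2.symm)), hc1]

def DscN (n : ℕ) (π : Equiv.Perm (Fin n)) (j : ℕ) : Prop :=
  ∃ q r : Fin n, (r : ℕ) = (q : ℕ) + 1 ∧ ((π q : ℕ)) = j ∧ ((π r : ℕ)) < j




lemma pval_of_mem (n : ℕ) (π : Equiv.Perm (Fin n)) (k : ℕ) (h1 : 1 ≤ k) (h2 : k - 1 < n) :
    pval n π k = ((π ⟨k - 1, h2⟩ : Fin n) : ℕ) + 1 := by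
  rw [pval, dif_pos ⟨h2, h1⟩]

lemma pval_of_gt (n : ℕ) (π : Equiv.Perm (Fin n)) (k : ℕ) (h2 : ¬ (k - 1 < n)) :
    pval n π k = n + 1 := by
  rw [pval, dif_neg]; tauto

lemma asc_iff (n : ℕ) (π : Equiv.Perm (Fin n)) (i : ℕ) (h1 : 1 ≤ i) (h2 : i ≤ n) :
    IsAscVal n π i ↔ ¬ DscN n π (i - 1) := by
  constructor
  · intro hA hD
    obtain ⟨q, r, hr, hq, hlt⟩ := hD
    have hq1 : (q : ℕ) + 1 - 1 < n := by simpa using q.isLt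
    have hpv : pval n π ((q : ℕ) + 1) = i := by
      rw [pval_of_mem n π _ (by omega) hq1]
      have he : (⟨(q : ℕ) + 1 - 1, hq1⟩ : Fin n) = q := by apply Fin.ext; simp
      rw [he, hq]; omega
    have key := hA ((q : ℕ) + 1) (by omega) (by omega) hpv
    rw [hpv] at key
    have hr1 : (q : ℕ) + 1 + 1 - 1 < n := by simpa [← hr] using r.isLt
    rw [pval_of_mem n π _ (by omega) hr1] at key
    have he2 : (⟨(q : ℕ) + 1 + 1 - 1, hr1⟩ : Fin n) = r := by apply Fin.ext; simp [hr]
    rw [he2] at key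
    omega
  · intro hD t ht1 ht2 hpv
    have htn : t - 1 < n := by omega
    rw [pval_of_mem n π t ht1 htn] at hpv ⊢
    by_cases hlast : t = n
    · rw [pval_of_gt n π (t + 1) (by omega)]
      have := (π ⟨t - 1, htn⟩).isLt
      omega
    · have htn2 : t + 1 - 1 < n := by omega
      rw [pval_of_mem n π (t + 1) (by omega) htn2]
      have hne : (π ⟨t + 1 - 1, htn2⟩ : ℕ) ≠ (π ⟨t - 1, htn⟩ : ℕ) := by
        intro h
        have := π.injective (Fin.ext h : π ⟨t + 1 - 1, htn2⟩ = π ⟨t - 1, htn⟩)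
        have := congrArg Fin.val this
        simp at this; omega
      rcases lt_trichotomy ((π ⟨t + 1 - 1, htn2⟩ : ℕ)) ((π ⟨t - 1, htn⟩ : ℕ)) with h | h | h
      · exfalso
        apply hD
        exact ⟨⟨t - 1, htn⟩, ⟨t + 1 - 1, htn2⟩, by simp; omega, by omega, by omega⟩
      · exact absurd h hne
      · omega

lemma desc_iff (n : ℕ) (π : Equiv.Perm (Fin n)) (j : ℕ) (h1 : 1 ≤ j) (h2 : j ≤ n - 1)
    (hn : 2 ≤ n) :
    IsDescVal n π (j + 1) ↔ DscN n π j := by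
  constructor
  · intro hDV
    have hj : j < n := by omega
    set q0 := π.symm ⟨j, hj⟩ with hq0
    have hq0v : (π q0 : ℕ) = j := by rw [hq0]; simp
    have hq1 : (q0 : ℕ) + 1 - 1 < n := by simpa using q0.isLt
    have hpv : pval n π ((q0 : ℕ) + 1) = j + 1 := by
      rw [pval_of_mem n π _ (by omega) hq1]
      have he : (⟨(q0 : ℕ) + 1 - 1, hq1⟩ : Fin n) = q0 := by apply Fin.ext; simp
      rw [he, hq0v]
    have key := hDV ((q0 : ℕ) + 1) (by omega) (by omega) hpv
    rw [hpv] at key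
    by_cases hlast : (q0 : ℕ) + 1 = n
    · rw [pval_of_gt n π _ (by omega)] at key; omega
    · have hr1 : (q0 : ℕ) + 1 + 1 - 1 < n := by omega
      rw [pval_of_mem n π _ (by omega) hr1] at key
      refine ⟨q0, ⟨(q0 : ℕ) + 1, by omega⟩, by simp, hq0v, ?_⟩
      have he2 : (⟨(q0 : ℕ) + 1 + 1 - 1, hr1⟩ : Fin n) = ⟨(q0 : ℕ) + 1, by omega⟩ := by
        apply Fin.ext; simp
      rw [he2] at key; omega
  · rintro ⟨q, r, hr, hq, hlt⟩ t ht1 ht2 hpv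
    have htn : t - 1 < n := by omega
    rw [pval_of_mem n π t ht1 htn] at hpv ⊢
    have htq : (⟨t - 1, htn⟩ : Fin n) = q := by
      apply π.injective
      apply Fin.ext
      omega
    have htval : t - 1 = (q : ℕ) := congrArg Fin.val htq
    have htn2 : t + 1 - 1 < n := by omega
    rw [pval_of_mem n π (t + 1) (by omega) htn2]
    have he2 : (⟨t + 1 - 1, htn2⟩ : Fin n) = r := by apply Fin.ext; simp; omega
    rw [he2]
    omega

def fsucc {n : ℕ} (q : Fin n) : Fin n := if h : (q : ℕ) + 1 < n then ⟨(q : ℕ) + 1, h⟩ else q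

lemma fsucc_val {n : ℕ} {q : Fin n} (h : (q : ℕ) + 1 < n) : ((fsucc q : Fin n) : ℕ) = (q : ℕ) + 1 := by
  rw [fsucc, dif_pos h]

lemma inj2 {α : Type*} {a b : α} (h : a ≠ b) : Function.Injective ![a, b] := by
  intro x y hxy
  fin_cases x <;> fin_cases y <;> simp_all

lemma inj3 {α : Type*} {a b c : α} (hab : a ≠ b) (hac : a ≠ c) (hbc : b ≠ c) :
    Function.Injective ![a, b, c] := by
  intro x y hxy
  fin_cases x <;> fin_cases y <;> simp_all

lemma inj4 {α : Type*} {a b c d : α} (hab : a ≠ b) (hac : a ≠ c) (had : a ≠ d)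
    (hbc : b ≠ c) (hbd : b ≠ d) (hcd : c ≠ d) :
    Function.Injective ![a, b, c, d] := by
  intro x y hxy
  fin_cases x <;> fin_cases y <;> simp_all

lemma card_filter_lt (n m : ℕ) (h : m ≤ n) :
    (Finset.univ.filter (fun q : Fin n => (q : ℕ) < m)).card = m := by
  have : (Finset.univ.filter (fun q : Fin n => (q : ℕ) < m))
      = (Finset.range m).attachFin (fun k hk => by simp at hk; omega) := by
    ext a
    simp [Finset.mem_attachFin]
  rw [this, Finset.card_attachFin, Finset.card_range]

lemma card_val_pairs (n m : ℕ) (hm : m ≤ n) :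
    (Finset.univ.filter (fun x : Fin n × Fin n =>
      (x.1 : ℕ) < m ∧ (x.2 : ℕ) < m ∧ x.1 ≠ x.2)).card = m * (m - 1) := by
  have hset : (Finset.univ.filter (fun x : Fin n × Fin n =>
      (x.1 : ℕ) < m ∧ (x.2 : ℕ) < m ∧ x.1 ≠ x.2))
      = (Finset.univ.filter (fun q : Fin n => (q : ℕ) < m)).offDiag := by
    ext x
    simp [Finset.mem_offDiag, and_assoc]
  rw [hset, Finset.offDiag_card, card_filter_lt n m hm]
  cases m with
  | zero => rfl
  | succ k => simp [Nat.succ_sub_one, Nat.succ_mul, Nat.mul_succ]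

lemma card_pos_pairs (n : ℕ) (hn : 2 ≤ n) :
    (Finset.univ.filter (fun x : Fin n × Fin n =>
      (x.1 : ℕ) + 1 < n ∧ (x.2 : ℕ) + 1 < n ∧ x.1 ≠ x.2 ∧
        (x.2 : ℕ) ≠ (x.1 : ℕ) + 1 ∧ (x.1 : ℕ) ≠ (x.2 : ℕ) + 1)).card
      = (n - 2) * (n - 3) := by
  classical
  set S := Finset.univ.filter (fun q : Fin n => (q : ℕ) + 1 < n) with hS
  have hmemS : ∀ q : Fin n, q ∈ S ↔ (q : ℕ) + 1 < n := by
    intro q; rw [hS]; simp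
  have hScard : S.card = n - 1 := by
    rw [hS]
    have : (Finset.univ.filter (fun q : Fin n => (q : ℕ) + 1 < n))
        = (Finset.univ.filter (fun q : Fin n => (q : ℕ) < n - 1)) := by
      apply Finset.filter_congr; intro q _; constructor <;> (intro; omega)
    rw [this, card_filter_lt n (n-1) (by omega)]
  set W := S.offDiag with hW
  have hmemW : ∀ x : Fin n × Fin n, x ∈ W ↔
      ((x.1 : ℕ) + 1 < n ∧ (x.2 : ℕ) + 1 < n ∧ x.1 ≠ x.2) := by
    intro x
    rw [hW, Finset.mem_offDiag, hmemS, hmemS]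
  have hWcard : W.card = (n - 1) * (n - 2) := by
    rw [hW, Finset.offDiag_card, hScard]
    cases n with
    | zero => omega
    | succ k => cases k with
      | zero => omega
      | succ l =>
        have : l + 1 + 1 - 1 = l + 1 := by omega
        rw [this]
        have : l + 1 + 1 - 2 = l := by omega
        rw [this]
        cases l with
        | zero => rfl
        | succ u => ring_nf; omega
  set B1 := W.filter (fun x => (x.2 : ℕ) = (x.1 : ℕ) + 1) with hB1
  set B2 := W.filter (fun x => (x.1 : ℕ) = (x.2 : ℕ) + 1) with hB2
  set T := Finset.univ.filter (fun q : Fin n => (q : ℕ) + 2 < n) with hT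
  have hTcard : T.card = n - 2 := by
    rw [hT]
    have : (Finset.univ.filter (fun q : Fin n => (q : ℕ) + 2 < n))
        = (Finset.univ.filter (fun q : Fin n => (q : ℕ) < n - 2)) := by
      apply Finset.filter_congr; intro q _; constructor <;> (intro; omega)
    rw [this, card_filter_lt n (n-2) (by omega)]
  have hB1card : B1.card = n - 2 := by
    have himg : B1 = T.image (fun (q : Fin n) => (q, fsucc q)) := by
      ext x
      simp only [hB1, Finset.mem_filter, hmemW, Finset.mem_image, hT]
      constructor
      · rintro ⟨⟨h1, h2, h3⟩, h4⟩
        refine ⟨x.1, by simp; omega, ?_⟩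
        have he : fsucc x.1 = x.2 := by
          apply Fin.ext
          rw [fsucc_val (by omega)]; omega
        rw [he]
      · rintro ⟨q, hq, rfl⟩
        simp only [Finset.mem_filter, Finset.mem_univ, true_and] at hq
        have hv := fsucc_val (show (q:ℕ)+1 < n by omega)
        dsimp only
        refine ⟨⟨by omega, by omega, ?_⟩, by omega⟩
        intro hcontra
        have := congrArg Fin.val hcontra
        omega
    rw [himg, Finset.card_image_of_injective _ (fun a b hab => by
      have := congrArg Prod.fst hab; simpa using this), hTcard]
  have hB2card : B2.card = n - 2 := by
    have himg : B2 = T.image (fun (q : Fin n) => (fsucc q, q)) := by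
      ext x
      simp only [hB2, Finset.mem_filter, hmemW, Finset.mem_image, hT]
      constructor
      · rintro ⟨⟨h1, h2, h3⟩, h4⟩
        refine ⟨x.2, by simp; omega, ?_⟩
        have he : fsucc x.2 = x.1 := by
          apply Fin.ext
          rw [fsucc_val (by omega)]; omega
        rw [he]
      · rintro ⟨q, hq, rfl⟩
        simp only [Finset.mem_filter, Finset.mem_univ, true_and] at hq
        have hv := fsucc_val (show (q:ℕ)+1 < n by omega)
        dsimp only
        refine ⟨⟨by omega, by omega, ?_⟩, by omega⟩
        intro hcontra
        have := congrArg Fin.val hcontra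
        omega
    rw [himg, Finset.card_image_of_injective _ (fun a b hab => by
      have := congrArg Prod.snd hab; simpa using this), hTcard]
  have hsub : B1 ∪ B2 ⊆ W := by
    intro x hx
    rcases Finset.mem_union.mp hx with h | h
    · exact (Finset.mem_filter.mp h).1
    · exact (Finset.mem_filter.mp h).1
  have hdisj : Disjoint B1 B2 := by
    rw [Finset.disjoint_left]
    intro x hx1 hx2
    have h1 := (Finset.mem_filter.mp hx1).2
    have h2 := (Finset.mem_filter.mp hx2).2
    omega
  have hsdiff : (Finset.univ.filter (fun x : Fin n × Fin n =>
      (x.1 : ℕ) + 1 < n ∧ (x.2 : ℕ) + 1 < n ∧ x.1 ≠ x.2 ∧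
        (x.2 : ℕ) ≠ (x.1 : ℕ) + 1 ∧ (x.1 : ℕ) ≠ (x.2 : ℕ) + 1))
      = W \ (B1 ∪ B2) := by
    ext x
    simp only [Finset.mem_filter, Finset.mem_univ, true_and, Finset.mem_sdiff,
      Finset.mem_union, hmemW, hB1, hB2, not_or]
    tauto
  rw [hsdiff, Finset.card_sdiff_of_subset hsub, Finset.card_union_of_disjoint hdisj,
    hB1card, hB2card, hWcard]
  cases n with
  | zero => omega
  | succ k => cases k with
    | zero => omega
    | succ l =>
      cases l with
      | zero => rfl
      | succ u =>
        cases u with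
        | zero => rfl
        | succ w =>
          have e1 : w + 1 + 1 + 1 + 1 - 1 = w + 3 := by omega
          have e2 : w + 1 + 1 + 1 + 1 - 2 = w + 2 := by omega
          have e3 : w + 1 + 1 + 1 + 1 - 3 = w + 1 := by omega
          rw [e1, e2, e3]
          have : (w + 3) * (w + 2) = (w+2)*(w+1) + ((w+2) + (w+2)) := by ring
          omega

lemma fin2_forall {P : Fin 2 → Prop} : (∀ t, P t) ↔ P 0 ∧ P 1 :=
  ⟨fun h => ⟨h 0, h 1⟩, by rintro ⟨a, b⟩ t; fin_cases t <;> assumption⟩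

lemma fin3_forall {P : Fin 3 → Prop} : (∀ t, P t) ↔ P 0 ∧ P 1 ∧ P 2 :=
  ⟨fun h => ⟨h 0, h 1, h 2⟩, by rintro ⟨a, b, c⟩ t; fin_cases t <;> assumption⟩

lemma fin4_forall {P : Fin 4 → Prop} : (∀ t, P t) ↔ P 0 ∧ P 1 ∧ P 2 ∧ P 3 :=
  ⟨fun h => ⟨h 0, h 1, h 2, h 3⟩, by rintro ⟨a, b, c, d⟩ t; fin_cases t <;> assumption⟩

lemma card_X (n j : ℕ) (hn : 2 ≤ n) (hj : j < n) :
    (Finset.univ.filter (fun π : Equiv.Perm (Fin n) => DscN n π j)).card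
      = j * ((n - 1) * Nat.factorial (n - 2)) := by
  classical
  set D := Finset.univ.filter
    (fun x : Fin n × Fin n => (x.1 : ℕ) + 1 < n ∧ (x.2 : ℕ) < j) with hD
  set A := fun x : Fin n × Fin n => Finset.univ.filter
      (fun π : Equiv.Perm (Fin n) => π x.1 = ⟨j, hj⟩ ∧ π (fsucc x.1) = x.2) with hA
  have hmemD : ∀ x : Fin n × Fin n, x ∈ D ↔ ((x.1 : ℕ) + 1 < n ∧ (x.2 : ℕ) < j) := by
    intro x; rw [hD]; simp
  have hmemA : ∀ x (π : Equiv.Perm (Fin n)),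
      π ∈ A x ↔ (π x.1 = ⟨j, hj⟩ ∧ π (fsucc x.1) = x.2) := by
    intro x π; rw [hA]; simp
  have hunion : Finset.univ.filter (fun π : Equiv.Perm (Fin n) => DscN n π j)
      = D.biUnion A := by
    ext π
    simp only [Finset.mem_filter, Finset.mem_univ, true_and, Finset.mem_biUnion]
    constructor
    · rintro ⟨q, r, hr, hq, hlt⟩
      have hq1 : (q : ℕ) + 1 < n := by have := r.isLt; omega
      have hfs : fsucc q = r := Fin.ext (by rw [fsucc_val hq1]; omega)
      refine ⟨(q, π r), (hmemD _).mpr ⟨hq1, hlt⟩, (hmemA _ _).mpr ⟨Fin.ext hq, by rw [hfs]⟩⟩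
    · rintro ⟨x, hxD, hxA⟩
      rw [hmemD] at hxD
      rw [hmemA] at hxA
      refine ⟨x.1, fsucc x.1, fsucc_val hxD.1, by rw [hxA.1], by rw [hxA.2]; exact hxD.2⟩
  rw [hunion, Finset.card_biUnion]
  · have hcardA : ∀ x ∈ D, (A x).card = Nat.factorial (n - 2) := by
      intro x hxD
      rw [hmemD] at hxD
      have hAeq : A x = Finset.univ.filter
          (fun π : Equiv.Perm (Fin n) =>
            ∀ t : Fin 2, π (![x.1, fsucc x.1] t) = ![⟨j, hj⟩, x.2] t) := by
        ext π
        rw [hmemA]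
        simp [fin2_forall]
      rw [hAeq, card_perm_fix _ _
        (inj2 (fun h => by have := congrArg Fin.val h; rw [fsucc_val hxD.1] at this; omega))
        (inj2 (fun h => by have := congrArg Fin.val h; simp only [Fin.val_mk] at this; omega))]
    rw [Finset.sum_congr rfl hcardA, Finset.sum_const, smul_eq_mul]
    have hcardD : D.card = (n - 1) * j := by
      rw [hD, ← Finset.univ_product_univ,
        Finset.filter_product (fun q : Fin n => (q : ℕ) + 1 < n) (fun s : Fin n => (s : ℕ) < j),
        Finset.card_product]
      have h1 : (Finset.univ.filter (fun q : Fin n => (q : ℕ) + 1 < n))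
          = (Finset.univ.filter (fun q : Fin n => (q : ℕ) < n - 1)) := by
        apply Finset.filter_congr; intro q _; constructor <;> (intro; omega)
      rw [h1, card_filter_lt n (n-1) (by omega), card_filter_lt n j (by omega)]
    rw [hcardD]; ring
  · intro x hx y hy hxy
    rw [Function.onFun, Finset.disjoint_left]
    intro π hπx hπy
    rw [hmemA] at hπx hπy
    apply hxy
    have h1 : x.1 = y.1 := π.injective (hπx.1.trans hπy.1.symm)
    have h2 : x.2 = y.2 := by rw [← hπx.2, ← hπy.2, h1]
    exact Prod.ext h1 h2

lemma card_Y (n j : ℕ) (hn : 2 ≤ n) (hj1 : 1 ≤ j) (hj : j < n) :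
    (Finset.univ.filter (fun π : Equiv.Perm (Fin n) => DscN n π j ∧ DscN n π (j - 1))).card
      = (n - 2) * (j - 1) * Nat.factorial (n - 3)
        + (n - 2) * (n - 3) * ((j - 1) * (j - 2)) * Nat.factorial (n - 4) := by
  classical
  have hj1n : j - 1 < n := by omega
  set P := fun π : Equiv.Perm (Fin n) => DscN n π j ∧ DscN n π (j - 1) with hP
  set C := fun π : Equiv.Perm (Fin n) =>
    ∃ q r : Fin n, (r : ℕ) = (q : ℕ) + 1 ∧ (π q : ℕ) = j ∧ (π r : ℕ) = j - 1 with hC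
  have hsplit := Finset.card_filter_add_card_filter_not
    (s := Finset.univ.filter P) (p := C)
  rw [Finset.filter_filter, Finset.filter_filter] at hsplit
  -- Part 1 : chain case
  have hpart1 : (Finset.univ.filter (fun π : Equiv.Perm (Fin n) => P π ∧ C π)).card
      = (n - 2) * (j - 1) * Nat.factorial (n - 3) := by
    set D1 := Finset.univ.filter
      (fun x : Fin n × Fin n => (x.1 : ℕ) + 2 < n ∧ (x.2 : ℕ) < j - 1) with hD1
    set A1 := fun x : Fin n × Fin n => Finset.univ.filter
        (fun π : Equiv.Perm (Fin n) => π x.1 = ⟨j, hj⟩ ∧ π (fsucc x.1) = ⟨j - 1, hj1n⟩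
          ∧ π (fsucc (fsucc x.1)) = x.2) with hA1
    have hmemD : ∀ x : Fin n × Fin n, x ∈ D1 ↔ ((x.1 : ℕ) + 2 < n ∧ (x.2 : ℕ) < j - 1) := by
      intro x; rw [hD1]; simp
    have hmemA : ∀ x (π : Equiv.Perm (Fin n)), π ∈ A1 x ↔
        (π x.1 = ⟨j, hj⟩ ∧ π (fsucc x.1) = ⟨j - 1, hj1n⟩ ∧ π (fsucc (fsucc x.1)) = x.2) := by
      intro x π; rw [hA1]; simp
    have hunion : Finset.univ.filter (fun π : Equiv.Perm (Fin n) => P π ∧ C π)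
        = D1.biUnion A1 := by
      ext π
      simp only [Finset.mem_filter, Finset.mem_univ, true_and, Finset.mem_biUnion]
      constructor
      · rintro ⟨⟨hPj, hPj'⟩, q, r, hr, hq, hrv⟩
        obtain ⟨p, r2, hr2, hp, hlt2⟩ := hPj'
        have hpr : p = r := π.injective (Fin.ext (by omega))
        have hq1 : (q : ℕ) + 1 < n := by have := r.isLt; omega
        have hq2 : (q : ℕ) + 2 < n := by have := r2.isLt; omega
        have hfs : fsucc q = r := Fin.ext (by rw [fsucc_val hq1]; omega)
        have hfs2 : fsucc (fsucc q) = r2 := by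
          apply Fin.ext
          rw [hfs, fsucc_val (by omega : (r : ℕ) + 1 < n)]
          omega
        refine ⟨(q, π r2), (hmemD _).mpr ⟨hq2, by show ((π r2 : Fin n) : ℕ) < j - 1; omega⟩,
          (hmemA _ _).mpr
          ⟨Fin.ext hq, by rw [hfs]; exact Fin.ext hrv, by rw [hfs2]⟩⟩
      · rintro ⟨x, hxD, hxA⟩
        rw [hmemD] at hxD
        rw [hmemA] at hxA
        obtain ⟨h1, h2, h3⟩ := hxA
        have hv1 : (fsucc x.1 : ℕ) = (x.1 : ℕ) + 1 := fsucc_val (by omega)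
        have hv2 : (fsucc (fsucc x.1) : ℕ) = (x.1 : ℕ) + 2 := by
          rw [fsucc_val (by omega), hv1]
        refine ⟨⟨⟨x.1, fsucc x.1, hv1, by rw [h1], by rw [h2]; simp; omega⟩,
          ⟨fsucc x.1, fsucc (fsucc x.1), by omega, by rw [h2], by rw [h3]; exact hxD.2⟩⟩,
          ⟨x.1, fsucc x.1, hv1, by rw [h1], by rw [h2]⟩⟩
    rw [hunion, Finset.card_biUnion]
    · have hcardA : ∀ x ∈ D1, (A1 x).card = Nat.factorial (n - 3) := by
        intro x hxD
        rw [hmemD] at hxD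
        have hv1 : (fsucc x.1 : ℕ) = (x.1 : ℕ) + 1 := fsucc_val (by omega)
        have hv2 : (fsucc (fsucc x.1) : ℕ) = (x.1 : ℕ) + 2 := by
          rw [fsucc_val (by omega), hv1]
        have hAeq : A1 x = Finset.univ.filter
            (fun π : Equiv.Perm (Fin n) =>
              ∀ t : Fin 3, π (![x.1, fsucc x.1, fsucc (fsucc x.1)] t)
                = ![⟨j, hj⟩, ⟨j - 1, hj1n⟩, x.2] t) := by
          ext π
          rw [hmemA]
          simp [fin3_forall]
        rw [hAeq, card_perm_fix _ _
          (inj3 (fun h => by have := congrArg Fin.val h; omega)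
                (fun h => by have := congrArg Fin.val h; omega)
                (fun h => by have := congrArg Fin.val h; omega))
          (inj3 (fun h => by have := congrArg Fin.val h; simp only [Fin.val_mk] at this; omega)
                (fun h => by have := congrArg Fin.val h; simp only [Fin.val_mk] at this; omega)
                (fun h => by have := congrArg Fin.val h; simp only [Fin.val_mk] at this; omega))]
      rw [Finset.sum_congr rfl hcardA, Finset.sum_const, smul_eq_mul]
      have hcardD : D1.card = (n - 2) * (j - 1) := by
        rw [hD1, ← Finset.univ_product_univ,
          Finset.filter_product (fun q : Fin n => (q : ℕ) + 2 < n)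
            (fun s : Fin n => (s : ℕ) < j - 1),
          Finset.card_product]
        have h1 : (Finset.univ.filter (fun q : Fin n => (q : ℕ) + 2 < n))
            = (Finset.univ.filter (fun q : Fin n => (q : ℕ) < n - 2)) := by
          apply Finset.filter_congr; intro q _; constructor <;> (intro; omega)
        rw [h1, card_filter_lt n (n-2) (by omega), card_filter_lt n (j-1) (by omega)]
      rw [hcardD]
    · intro x hx y hy hxy
      rw [Function.onFun, Finset.disjoint_left]
      intro π hπx hπy
      rw [hmemA] at hπx hπy
      apply hxy
      have h1 : x.1 = y.1 := π.injective (hπx.1.trans hπy.1.symm)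
      have h2 : x.2 = y.2 := by rw [← hπx.2.2, ← hπy.2.2, h1]
      exact Prod.ext h1 h2
  -- Part 2 : generic case
  have hpart2 : (Finset.univ.filter (fun π : Equiv.Perm (Fin n) => P π ∧ ¬ C π)).card
      = (n - 2) * (n - 3) * ((j - 1) * (j - 2)) * Nat.factorial (n - 4) := by
    set D2 := Finset.univ.filter
      (fun x : (Fin n × Fin n) × (Fin n × Fin n) =>
        ((x.1.1 : ℕ) + 1 < n ∧ (x.1.2 : ℕ) + 1 < n ∧ x.1.1 ≠ x.1.2 ∧
          (x.1.2 : ℕ) ≠ (x.1.1 : ℕ) + 1 ∧ (x.1.1 : ℕ) ≠ (x.1.2 : ℕ) + 1) ∧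
        ((x.2.1 : ℕ) < j - 1 ∧ (x.2.2 : ℕ) < j - 1 ∧ x.2.1 ≠ x.2.2)) with hD2
    set A2 := fun x : (Fin n × Fin n) × (Fin n × Fin n) => Finset.univ.filter
        (fun π : Equiv.Perm (Fin n) => π x.1.1 = ⟨j, hj⟩ ∧ π (fsucc x.1.1) = x.2.1
          ∧ π x.1.2 = ⟨j - 1, hj1n⟩ ∧ π (fsucc x.1.2) = x.2.2) with hA2
    have hmemD : ∀ x, x ∈ D2 ↔
        (((x.1.1 : ℕ) + 1 < n ∧ (x.1.2 : ℕ) + 1 < n ∧ x.1.1 ≠ x.1.2 ∧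
          (x.1.2 : ℕ) ≠ (x.1.1 : ℕ) + 1 ∧ (x.1.1 : ℕ) ≠ (x.1.2 : ℕ) + 1) ∧
        ((x.2.1 : ℕ) < j - 1 ∧ (x.2.2 : ℕ) < j - 1 ∧ x.2.1 ≠ x.2.2)) := by
      intro x; rw [hD2]; simp
    have hmemA : ∀ x (π : Equiv.Perm (Fin n)), π ∈ A2 x ↔
        (π x.1.1 = ⟨j, hj⟩ ∧ π (fsucc x.1.1) = x.2.1
          ∧ π x.1.2 = ⟨j - 1, hj1n⟩ ∧ π (fsucc x.1.2) = x.2.2) := by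
      intro x π; rw [hA2]; simp
    have hunion : Finset.univ.filter (fun π : Equiv.Perm (Fin n) => P π ∧ ¬ C π)
        = D2.biUnion A2 := by
      ext π
      simp only [Finset.mem_filter, Finset.mem_univ, true_and, Finset.mem_biUnion]
      constructor
      · rintro ⟨⟨hPj, hPj'⟩, hnC⟩
        obtain ⟨q, r, hr, hq, hlt⟩ := hPj
        obtain ⟨p, r2, hr2, hp, hlt2⟩ := hPj'
        have hq1 : (q : ℕ) + 1 < n := by have := r.isLt; omega
        have hp1 : (p : ℕ) + 1 < n := by have := r2.isLt; omega
        have hfs : fsucc q = r := Fin.ext (by rw [fsucc_val hq1]; omega)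
        have hfs2 : fsucc p = r2 := Fin.ext (by rw [fsucc_val hp1]; omega)
        have hsne : (π r : ℕ) ≠ j - 1 := by
          intro hcontra
          exact hnC ⟨q, r, hr, hq, hcontra⟩
        have hpq : p ≠ q := by
          intro hcontra; rw [hcontra, hq] at hp; omega
        have hpnr : (p : ℕ) ≠ (q : ℕ) + 1 := by
          intro hcontra
          have : p = r := Fin.ext (by omega)
          rw [this] at hp; omega
        have hqnr2 : (q : ℕ) ≠ (p : ℕ) + 1 := by
          intro hcontra
          have : q = r2 := Fin.ext (by omega)
          rw [this] at hq; omega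
        have hrr2 : r ≠ r2 := by
          intro hcontra
          have := congrArg Fin.val hcontra; omega
        have hvne : π r ≠ π r2 := fun h => hrr2 (π.injective h)
        refine ⟨((q, p), (π r, π r2)), (hmemD _).mpr
          ⟨⟨hq1, hp1, fun h => hpq h.symm, hpnr, hqnr2⟩,
            ⟨by show ((π r : Fin n) : ℕ) < j - 1; omega,
             by show ((π r2 : Fin n) : ℕ) < j - 1; omega, hvne⟩⟩,
          (hmemA _ _).mpr ⟨Fin.ext hq, by rw [hfs], Fin.ext hp, by rw [hfs2]⟩⟩
      · rintro ⟨x, hxD, hxA⟩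
        rw [hmemD] at hxD
        rw [hmemA] at hxA
        obtain ⟨⟨hq1, hp1, hne, hadj1, hadj2⟩, ⟨hs1, hs2, hsne⟩⟩ := hxD
        obtain ⟨h1, h2, h3, h4⟩ := hxA
        have hv1 : (fsucc x.1.1 : ℕ) = (x.1.1 : ℕ) + 1 := fsucc_val hq1
        have hv2 : (fsucc x.1.2 : ℕ) = (x.1.2 : ℕ) + 1 := fsucc_val hp1
        refine ⟨⟨⟨x.1.1, fsucc x.1.1, hv1, by rw [h1], by rw [h2]; omega⟩,
          ⟨x.1.2, fsucc x.1.2, hv2, by rw [h3], by rw [h4]; omega⟩⟩, ?_⟩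
        rintro ⟨q0, r0, hr0, hq0, hr0v⟩
        have hq0e : q0 = x.1.1 := π.injective (by rw [h1]; exact Fin.ext hq0)
        have hr0e : r0 = fsucc x.1.1 := Fin.ext (by omega)
        rw [hr0e, h2] at hr0v
        omega
    rw [hunion, Finset.card_biUnion]
    · have hcardA : ∀ x ∈ D2, (A2 x).card = Nat.factorial (n - 4) := by
        intro x hxD
        rw [hmemD] at hxD
        obtain ⟨⟨hq1, hp1, hne, hadj1, hadj2⟩, ⟨hs1, hs2, hsne⟩⟩ := hxD
        have hv1 : (fsucc x.1.1 : ℕ) = (x.1.1 : ℕ) + 1 := fsucc_val hq1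
        have hv2 : (fsucc x.1.2 : ℕ) = (x.1.2 : ℕ) + 1 := fsucc_val hp1
        have hnefin : (x.1.1 : ℕ) ≠ (x.1.2 : ℕ) := fun h => hne (Fin.ext h)
        have hsnefin : (x.2.1 : ℕ) ≠ (x.2.2 : ℕ) := fun h => hsne (Fin.ext h)
        have hAeq : A2 x = Finset.univ.filter
            (fun π : Equiv.Perm (Fin n) =>
              ∀ t : Fin 4, π (![x.1.1, fsucc x.1.1, x.1.2, fsucc x.1.2] t)
                = ![⟨j, hj⟩, x.2.1, ⟨j - 1, hj1n⟩, x.2.2] t) := by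
          ext π
          rw [hmemA]
          simp [fin4_forall]
        rw [hAeq, card_perm_fix _ _
          (inj4 (fun h => by have := congrArg Fin.val h; omega)
                (fun h => by have := congrArg Fin.val h; omega)
                (fun h => by have := congrArg Fin.val h; omega)
                (fun h => by have := congrArg Fin.val h; omega)
                (fun h => by have := congrArg Fin.val h; omega)
                (fun h => by have := congrArg Fin.val h; omega))
          (inj4 (fun h => by have := congrArg Fin.val h; simp only [Fin.val_mk] at this; omega)
                (fun h => by have := congrArg Fin.val h; simp only [Fin.val_mk] at this; omega)
                (fun h => by have := congrArg Fin.val h; simp only [Fin.val_mk] at this; omega)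
                (fun h => by have := congrArg Fin.val h; simp only [Fin.val_mk] at this; omega)
                (fun h => by have := congrArg Fin.val h; omega)
                (fun h => by have := congrArg Fin.val h; simp only [Fin.val_mk] at this; omega))]
      rw [Finset.sum_congr rfl hcardA, Finset.sum_const, smul_eq_mul]
      have hcardD : D2.card = ((n - 2) * (n - 3)) * ((j - 1) * (j - 2)) := by
        rw [hD2, ← Finset.univ_product_univ,
          Finset.filter_product
            (fun y : Fin n × Fin n => (y.1 : ℕ) + 1 < n ∧ (y.2 : ℕ) + 1 < n ∧ y.1 ≠ y.2 ∧
              (y.2 : ℕ) ≠ (y.1 : ℕ) + 1 ∧ (y.1 : ℕ) ≠ (y.2 : ℕ) + 1)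
            (fun y : Fin n × Fin n => (y.1 : ℕ) < j - 1 ∧ (y.2 : ℕ) < j - 1 ∧ y.1 ≠ y.2),
          Finset.card_product, card_pos_pairs n hn, card_val_pairs n (j-1) (by omega)]
        rfl
      rw [hcardD]
    · intro x hx y hy hxy
      rw [Function.onFun, Finset.disjoint_left]
      intro π hπx hπy
      rw [hmemA] at hπx hπy
      apply hxy
      have h1 : x.1.1 = y.1.1 := π.injective (hπx.1.trans hπy.1.symm)
      have h3 : x.1.2 = y.1.2 := π.injective (hπx.2.2.1.trans hπy.2.2.1.symm)
      have h2 : x.2.1 = y.2.1 := by rw [← hπx.2.1, ← hπy.2.1, h1]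
      have h4 : x.2.2 = y.2.2 := by rw [← hπx.2.2.2, ← hπy.2.2.2, h3]
      exact Prod.ext (Prod.ext h1 h3) (Prod.ext h2 h4)
  have hgoal : (Finset.univ.filter (fun π : Equiv.Perm (Fin n) =>
      DscN n π j ∧ DscN n π (j - 1))).card = (Finset.univ.filter P).card := rfl
  rw [hgoal]
  omega

lemma sum_Icc_id (m : ℕ) : 2 * (∑ i ∈ Finset.Icc 1 m, i) = m * (m + 1) := by
  induction m with
  | zero => simp
  | succ k ih =>
    rw [Finset.sum_Icc_succ_top (by omega)]
    cases k with
    | zero => simp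
    | succ l => rw [Nat.mul_add, ih]; ring

lemma sum_Icc_sub1 (m : ℕ) : 2 * (∑ i ∈ Finset.Icc 1 m, (i - 1)) = m * (m - 1) := by
  induction m with
  | zero => simp
  | succ k ih =>
    rw [Finset.sum_Icc_succ_top (by omega)]
    rw [Nat.mul_add, ih]
    cases k with
    | zero => simp
    | succ l => simp [Nat.succ_sub_one]; ring

lemma sum_Icc_sub12 (m : ℕ) :
    3 * (∑ i ∈ Finset.Icc 1 m, (i - 1) * (i - 2)) = m * (m - 1) * (m - 2) := by
  induction m with
  | zero => simp
  | succ k ih =>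
    rw [Finset.sum_Icc_succ_top (by omega)]
    rw [Nat.mul_add, ih]
    cases k with
    | zero => simp
    | succ l =>
      cases l with
      | zero => simp
      | succ u => simp [Nat.succ_sub_one]; ring_nf

lemma key_arith (n : ℕ) (hn : 2 ≤ n) :
    Nat.factorial (n-1) * (n^2 + 4*n - 6)
      + (3 * ((n-1) * (n-2)) * ((n-2) * Nat.factorial (n-3))
        + 2 * ((n-1) * (n-2) * (n-3)) * ((n-2) * (n-3) * Nat.factorial (n-4)))
      = 3 * ((n-1) * n) * ((n-1) * Nat.factorial (n-2)) := by
  match n, hn with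
  | 2, _ => decide
  | 3, _ => decide
  | (m+4), _ =>
    have e1 : m + 4 - 1 = m + 3 := by omega
    have e2 : m + 4 - 2 = m + 2 := by omega
    have e3 : m + 4 - 3 = m + 1 := by omega
    have e4 : m + 4 - 4 = m := by omega
    rw [e1, e2, e3, e4]
    have f1 : Nat.factorial (m+1) = (m+1) * Nat.factorial m := rfl
    have f2 : Nat.factorial (m+2) = (m+2) * (m+1) * Nat.factorial m := by
      rw [Nat.factorial_succ (m+1), f1]; ring
    have f3 : Nat.factorial (m+3) = (m+3) * (m+2) * (m+1) * Nat.factorial m := by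
      rw [Nat.factorial_succ (m+2), f2]; ring
    have e5 : (m+4)^2 + 4*(m+4) - 6 = m^2 + 12*m + 26 := by ring_nf; omega
    rw [f1, f2, f3, e5]
    ring

theorem stmt1 (n : ℕ) (hn : 2 ≤ n) :
    ∑ π : Equiv.Perm (Fin n),
      ((Finset.Icc 1 (n - 1)).filter
        (fun i => IsAscVal n π i ∧ IsDescVal n π (i + 1))).card =
    Nat.factorial (n - 1) * (n ^ 2 + 4 * n - 6) / 6 := by
  classical
  have hstepA : ∀ π : Equiv.Perm (Fin n),
      ((Finset.Icc 1 (n - 1)).filter (fun i => IsAscVal n π i ∧ IsDescVal n π (i + 1)))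
      = ((Finset.Icc 1 (n - 1)).filter (fun i => DscN n π i ∧ ¬ DscN n π (i - 1))) := by
    intro π
    apply Finset.filter_congr
    intro i hi
    rw [Finset.mem_Icc] at hi
    rw [desc_iff n π i (by omega) (by omega) hn, asc_iff n π i (by omega) (by omega)]
    tauto
  have hstep1 : ∑ π : Equiv.Perm (Fin n),
      ((Finset.Icc 1 (n - 1)).filter (fun i => IsAscVal n π i ∧ IsDescVal n π (i + 1))).card
      = ∑ π : Equiv.Perm (Fin n),
      ((Finset.Icc 1 (n - 1)).filter (fun i => DscN n π i ∧ ¬ DscN n π (i - 1))).card :=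
    Finset.sum_congr rfl (fun π _ => by rw [hstepA π])
  have hswap : ∑ π : Equiv.Perm (Fin n),
      ((Finset.Icc 1 (n - 1)).filter (fun i => DscN n π i ∧ ¬ DscN n π (i - 1))).card
      = ∑ i ∈ Finset.Icc 1 (n - 1),
        (Finset.univ.filter
          (fun π : Equiv.Perm (Fin n) => DscN n π i ∧ ¬ DscN n π (i - 1))).card := by
    simp_rw [Finset.card_filter]
    exact Finset.sum_comm
  rw [hstep1, hswap]
  -- per-i identity : c i + y i = x i
  have hcy : ∀ i ∈ Finset.Icc 1 (n - 1),
      (Finset.univ.filter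
        (fun π : Equiv.Perm (Fin n) => DscN n π i ∧ ¬ DscN n π (i - 1))).card
      + (Finset.univ.filter
        (fun π : Equiv.Perm (Fin n) => DscN n π i ∧ DscN n π (i - 1))).card
      = (Finset.univ.filter (fun π : Equiv.Perm (Fin n) => DscN n π i)).card := by
    intro i _
    have h := Finset.card_filter_add_card_filter_not
      (s := Finset.univ.filter (fun π : Equiv.Perm (Fin n) => DscN n π i))
      (p := fun π => DscN n π (i - 1))
    rw [Finset.filter_filter, Finset.filter_filter] at h
    omega
  have hsum : (∑ i ∈ Finset.Icc 1 (n - 1),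
      (Finset.univ.filter
        (fun π : Equiv.Perm (Fin n) => DscN n π i ∧ ¬ DscN n π (i - 1))).card)
      + (∑ i ∈ Finset.Icc 1 (n - 1),
      (Finset.univ.filter
        (fun π : Equiv.Perm (Fin n) => DscN n π i ∧ DscN n π (i - 1))).card)
      = ∑ i ∈ Finset.Icc 1 (n - 1),
        (Finset.univ.filter (fun π : Equiv.Perm (Fin n) => DscN n π i)).card := by
    rw [← Finset.sum_add_distrib]
    exact Finset.sum_congr rfl hcy
  have hxs : ∑ i ∈ Finset.Icc 1 (n - 1),
      (Finset.univ.filter (fun π : Equiv.Perm (Fin n) => DscN n π i)).card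
      = (∑ i ∈ Finset.Icc 1 (n - 1), i) * ((n - 1) * Nat.factorial (n - 2)) := by
    rw [Finset.sum_mul]
    apply Finset.sum_congr rfl
    intro i hi
    rw [Finset.mem_Icc] at hi
    exact card_X n i hn (by omega)
  have hys : ∑ i ∈ Finset.Icc 1 (n - 1),
      (Finset.univ.filter
        (fun π : Equiv.Perm (Fin n) => DscN n π i ∧ DscN n π (i - 1))).card
      = (∑ i ∈ Finset.Icc 1 (n - 1), (i - 1)) * ((n - 2) * Nat.factorial (n - 3))
        + (∑ i ∈ Finset.Icc 1 (n - 1), (i - 1) * (i - 2))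
            * ((n - 2) * (n - 3) * Nat.factorial (n - 4)) := by
    rw [Finset.sum_mul, Finset.sum_mul, ← Finset.sum_add_distrib]
    apply Finset.sum_congr rfl
    intro i hi
    rw [Finset.mem_Icc] at hi
    rw [card_Y n i hn (by omega) (by omega)]
    ring
  have hA' := sum_Icc_id (n - 1)
  rw [(by omega : n - 1 + 1 = n)] at hA'
  have hB' := sum_Icc_sub1 (n - 1)
  rw [(by omega : n - 1 - 1 = n - 2)] at hB'
  have hC' := sum_Icc_sub12 (n - 1)
  rw [(by omega : n - 1 - 1 = n - 2), (by omega : n - 1 - 2 = n - 3)] at hC'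
  have e1 : 6 * ((∑ i ∈ Finset.Icc 1 (n - 1), i) * ((n - 1) * Nat.factorial (n - 2)))
      = 3 * (2 * (∑ i ∈ Finset.Icc 1 (n - 1), i)) * ((n - 1) * Nat.factorial (n - 2)) := by
    ring
  rw [hA'] at e1
  have e2 : 6 * ((∑ i ∈ Finset.Icc 1 (n - 1), (i - 1)) * ((n - 2) * Nat.factorial (n - 3))
        + (∑ i ∈ Finset.Icc 1 (n - 1), (i - 1) * (i - 2))
            * ((n - 2) * (n - 3) * Nat.factorial (n - 4)))
      = 3 * (2 * (∑ i ∈ Finset.Icc 1 (n - 1), (i - 1))) * ((n - 2) * Nat.factorial (n - 3))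
        + 2 * (3 * (∑ i ∈ Finset.Icc 1 (n - 1), (i - 1) * (i - 2)))
            * ((n - 2) * (n - 3) * Nat.factorial (n - 4)) := by
    ring
  rw [hB', hC'] at e2
  have hkey := key_arith n hn
  have h6 : 6 * (∑ i ∈ Finset.Icc 1 (n - 1),
      (Finset.univ.filter
        (fun π : Equiv.Perm (Fin n) => DscN n π i ∧ ¬ DscN n π (i - 1))).card)
      = Nat.factorial (n-1) * (n^2 + 4*n - 6) := by
    rw [hxs] at hsum
    rw [hys] at hsum
    linarith [hsum, e1, e2, hkey]
  omega
end

section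
/- For n ≥ 2, the identity (n-1)! · (n² + 4n - 6)/6 + (n-1)! = n! · (n+4)/6 holds; equivalently, the total number of corners in all tree-like tableaux of size n equals n! · (n+4)/6. -/
lemma aux_div (m : ℕ) : 6 ∣ Nat.factorial (m + 1) * (m ^ 2 + 8 * m + 6) := by
  match m with
  | 0 => decide
  | 1 => decide
  | (k + 2) =>
    have h6 : 6 ∣ Nat.factorial (k + 3) := by
      have : Nat.factorial 3 ∣ Nat.factorial (k + 3) :=
        Nat.factorial_dvd_factorial (by omega)
      simpa [Nat.factorial] using this
    exact Dvd.dvd.mul_right h6 _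

theorem stmt2 (n : ℕ) (hn : 2 ≤ n) :
    Nat.factorial (n - 1) * (n ^ 2 + 4 * n - 6) / 6 + Nat.factorial (n - 1) =
      Nat.factorial n * (n + 4) / 6 := by
  obtain ⟨m, rfl⟩ : ∃ m, n = m + 2 := ⟨n - 2, by omega⟩
  have h1 : m + 2 - 1 = m + 1 := by omega
  have h2 : (m + 2) ^ 2 + 4 * (m + 2) - 6 = m ^ 2 + 8 * m + 6 := by ring_nf; omega
  rw [h1, h2]
  have hd := aux_div m
  have hfac : Nat.factorial (m + 2) * (m + 2 + 4)
      = Nat.factorial (m + 1) * (m ^ 2 + 8 * m + 6) + 6 * Nat.factorial (m + 1) := by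
    rw [Nat.factorial_succ]
    ring
  rw [hfac]
  obtain ⟨c, hc⟩ := hd
  rw [hc]
  omega
end

section
/- For n ≥ 2, the number of pairs (π, k) where π is a permutation of {1,...,n} and π(k) is an ascending run of size 1 (i.e., π(k-1) > π(k) > π(k+1) with the conventions π(0) = n+1 and π(n+1) = 0) equals n! · (n+4)/6. -/
open Equiv Finset

lemma count_mono (n m : ℕ) (f : Fin m ↪ Fin n) :
    ((Finset.univ : Finset (Equiv.Perm (Fin n))).filter
      (fun π => ∀ i j : Fin m, i < j → π (f i) < π (f j))).card * m.factorial
    = n.factorial := by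
  classical
  set E : Equiv.Perm (Fin m) →* Equiv.Perm (Fin n) := Equiv.Perm.viaEmbeddingHom f with hE
  have hEapp : ∀ (ρ : Equiv.Perm (Fin m)) (i : Fin m), E ρ (f i) = f (ρ i) := by
    intro ρ i
    simp [hE, Equiv.Perm.viaEmbeddingHom_apply, Equiv.Perm.viaEmbedding_apply]
  have key : (Finset.univ : Finset (Equiv.Perm (Fin n))).card =
      (((Finset.univ : Finset (Equiv.Perm (Fin n))).filter
        (fun π => ∀ i j : Fin m, i < j → π (f i) < π (f j))) ×ˢ
        (Finset.univ : Finset (Equiv.Perm (Fin m)))).card := by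
    apply Finset.card_bij'
      (i := fun π _ => (π * E (Tuple.sort (fun i => (π (f i) : ℕ))),
        (Tuple.sort (fun i => (π (f i) : ℕ)))⁻¹))
      (j := fun p _ => p.1 * E p.2)
    · intro π _
      simp only [Finset.mem_product, Finset.mem_filter, Finset.mem_univ, true_and, and_true]
      intro i j hij
      simp only [Equiv.Perm.mul_apply, hEapp]
      set σ := Tuple.sort (fun i => (π (f i) : ℕ))
      have hmono := Tuple.monotone_sort (fun i => (π (f i) : ℕ))
      have hle : (π (f (σ i)) : ℕ) ≤ (π (f (σ j)) : ℕ) := hmono hij.le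
      have hne : π (f (σ i)) ≠ π (f (σ j)) := by
        intro h
        exact absurd (σ.injective (f.injective (π.injective h))) hij.ne
      exact Fin.lt_def.mpr (lt_of_le_of_ne hle (fun h => hne (Fin.ext h)))
    · intro p _; exact Finset.mem_univ _
    · intro π _
      simp only
      rw [map_inv, mul_assoc, mul_inv_cancel, mul_one]
    · rintro ⟨π₀, ρ⟩ hp
      simp only [Finset.mem_product, Finset.mem_filter, Finset.mem_univ, true_and, and_true] at hp
      have hmono : Monotone (fun i => (π₀ (f i) : ℕ)) := by
        intro i j hij
        rcases hij.eq_or_lt with h | h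
        · rw [h]
        · exact (hp i j h).le
      have hsort : Tuple.sort (fun i => ((π₀ * E ρ) (f i) : ℕ)) = ρ⁻¹ := by
        symm
        rw [Tuple.eq_sort_iff]
        constructor
        · intro i j hij
          simp only [Function.comp_apply, Equiv.Perm.mul_apply, hEapp,
            Equiv.Perm.coe_inv, Equiv.apply_symm_apply]
          exact hmono hij
        · intro i j hij heq
          simp only [Equiv.Perm.mul_apply, hEapp, Equiv.Perm.coe_inv, Equiv.apply_symm_apply] at heq
          exact absurd (f.injective (π₀.injective (Fin.ext heq))) hij.ne
      simp only [hsort, Prod.mk.injEq]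
      exact ⟨by rw [map_inv, mul_assoc, mul_inv_cancel, mul_one], inv_inv ρ⟩
  rw [Finset.card_product] at key
  simp only [Finset.card_univ, Fintype.card_perm, Fintype.card_fin] at key
  omega

lemma count2_s3 {n : ℕ} (a b : Fin n) (hab : a ≠ b) :
    ((Finset.univ : Finset (Equiv.Perm (Fin n))).filter
      (fun π => π a < π b)).card * 2 = n.factorial := by
  have hf : Function.Injective ![a, b] := by
    intro i j hij
    fin_cases i <;> fin_cases j <;> simp_all
  have h := count_mono n 2 ⟨![a, b], hf⟩
  rw [show (Nat.factorial 2) = 2 from rfl] at h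
  rw [← h]
  congr 1
  apply congrArg Finset.card
  apply Finset.filter_congr
  intro π _
  simp only [Function.Embedding.coeFn_mk]
  constructor
  · intro h i j hij
    fin_cases i <;> fin_cases j <;> simp_all
  · intro h
    exact h 0 1 (by decide)

lemma count3_s3 {n : ℕ} (a b c : Fin n) (hab : a ≠ b) (hac : a ≠ c) (hbc : b ≠ c) :
    ((Finset.univ : Finset (Equiv.Perm (Fin n))).filter
      (fun π => π a < π b ∧ π b < π c)).card * 6 = n.factorial := by
  have hf : Function.Injective ![a, b, c] := by
    intro i j hij
    fin_cases i <;> fin_cases j <;> simp_all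
  have h := count_mono n 3 ⟨![a, b, c], hf⟩
  rw [show (Nat.factorial 3) = 6 from rfl] at h
  rw [← h]
  congr 1
  apply congrArg Finset.card
  apply Finset.filter_congr
  intro π _
  simp only [Function.Embedding.coeFn_mk]
  constructor
  · rintro ⟨h1, h2⟩ i j hij
    fin_cases i <;> fin_cases j <;> simp_all
    exact h1.trans h2
  · intro h
    exact ⟨h 0 1 (by decide), h 1 2 (by decide)⟩

/-- Value of the permutation at position `k ∈ [1,n]`, with values in `[1,n]`,
and the conventions `π(0) = n+1` and `π(k) = 0` for `k > n`. -/
def pval0 (n : ℕ) (π : Equiv.Perm (Fin n)) (k : ℕ) : ℕ :=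
  if k = 0 then n + 1
  else if h : k - 1 < n then ((π ⟨k - 1, h⟩ : Fin n) : ℕ) + 1 else 0

lemma pval0_pos {n : ℕ} (π : Equiv.Perm (Fin n)) {k : ℕ} (h1 : 1 ≤ k) (h2 : k ≤ n) :
    pval0 n π k = ((π ⟨k - 1, by omega⟩ : Fin n) : ℕ) + 1 := by
  unfold pval0
  rw [if_neg (by omega), dif_pos (by omega)]

lemma pval0_zero {n : ℕ} (π : Equiv.Perm (Fin n)) : pval0 n π 0 = n + 1 := rfl

lemma pval0_large {n : ℕ} (π : Equiv.Perm (Fin n)) {k : ℕ} (h : n < k) :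
    pval0 n π k = 0 := by
  unfold pval0
  rw [if_neg (by omega), dif_neg (by omega)]

theorem stmt3 (n : ℕ) (hn : 2 ≤ n) :
    ∑ π : Equiv.Perm (Fin n),
      ((Finset.Icc 1 n).filter
        (fun k => pval0 n π (k + 1) < pval0 n π k ∧ pval0 n π k < pval0 n π (k - 1))).card =
    Nat.factorial n * (n + 4) / 6 := by
  classical
  obtain ⟨m, rfl⟩ : ∃ m, n = m + 2 := ⟨n - 2, by omega⟩
  set F := Nat.factorial (m + 2) with hF
  set N : ℕ → ℕ := fun k =>
    ((Finset.univ : Finset (Equiv.Perm (Fin (m + 2)))).filter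
      (fun π => pval0 (m+2) π (k + 1) < pval0 (m+2) π k ∧
        pval0 (m+2) π k < pval0 (m+2) π (k - 1))).card with hN
  have hswap : (∑ π : Equiv.Perm (Fin (m+2)),
      ((Finset.Icc 1 (m+2)).filter
        (fun k => pval0 (m+2) π (k + 1) < pval0 (m+2) π k ∧
          pval0 (m+2) π k < pval0 (m+2) π (k - 1))).card) =
      ∑ k ∈ Finset.Icc 1 (m+2), N k := by
    simp only [Finset.card_filter, hN]
    exact Finset.sum_comm
  rw [hswap]
  -- endpoint k = 1
  have e1 : N 1 * 2 = F := by
    simp only [hN, hF]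
    rw [← count2_s3 (n := m+2) ⟨1, by omega⟩ ⟨0, by omega⟩ (by simp [Fin.ext_iff])]
    congr 1
    apply congrArg Finset.card
    apply Finset.filter_congr
    intro π _
    rw [pval0_pos π (k := 2) (by omega) (by omega),
      pval0_pos π (k := 1) (by omega) (by omega)]
    show _ ∧ _ < pval0 (m+2) π 0 ↔ _
    rw [pval0_zero]
    constructor
    · rintro ⟨h1, _⟩
      exact Fin.lt_def.mpr (Nat.lt_of_succ_lt_succ h1)
    · intro h
      exact ⟨Nat.succ_lt_succ (Fin.lt_def.mp h), Nat.succ_lt_succ (Fin.is_lt _)⟩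
  -- endpoint k = m+2
  have e2 : N (m+2) * 2 = F := by
    simp only [hN, hF]
    rw [← count2_s3 (n := m+2) ⟨m+2-1, by omega⟩ ⟨m+2-1-1, by omega⟩ (by simp [Fin.ext_iff])]
    congr 1
    apply congrArg Finset.card
    apply Finset.filter_congr
    intro π _
    rw [pval0_large π (k := m+2+1) (by omega),
      pval0_pos π (k := m+2) (by omega) (by omega),
      pval0_pos π (k := m+2-1) (by omega) (by omega)]
    constructor
    · rintro ⟨_, h2⟩
      exact Fin.lt_def.mpr (Nat.lt_of_succ_lt_succ h2)
    · intro h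
      exact ⟨Nat.succ_pos _, Nat.succ_lt_succ (Fin.lt_def.mp h)⟩
  -- middle values
  have e3 : ∀ k ∈ Finset.Icc 2 (m+1), N k * 6 = F := by
    intro k hk
    rw [Finset.mem_Icc] at hk
    simp only [hN, hF]
    rw [← count3_s3 (n := m+2) ⟨k+1-1, by omega⟩ ⟨k-1, by omega⟩ ⟨k-1-1, by omega⟩
      (by simp [Fin.ext_iff]; omega) (by simp [Fin.ext_iff]; omega)
      (by simp [Fin.ext_iff]; omega)]
    congr 1
    apply congrArg Finset.card
    apply Finset.filter_congr
    intro π _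
    rw [pval0_pos π (k := k+1) (by omega) (by omega),
      pval0_pos π (k := k) (by omega) (by omega),
      pval0_pos π (k := k-1) (by omega) (by omega)]
    constructor
    · rintro ⟨h1, h2⟩
      exact ⟨Fin.lt_def.mpr (Nat.lt_of_succ_lt_succ h1),
        Fin.lt_def.mpr (Nat.lt_of_succ_lt_succ h2)⟩
    · rintro ⟨h1, h2⟩
      exact ⟨Nat.succ_lt_succ (Fin.lt_def.mp h1), Nat.succ_lt_succ (Fin.lt_def.mp h2)⟩
  -- split the sum
  have hsplit : Finset.Icc 1 (m+2) = insert 1 (insert (m+2) (Finset.Icc 2 (m+1))) := by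
    ext x
    simp only [Finset.mem_insert, Finset.mem_Icc]
    omega
  have hnot1 : (1 : ℕ) ∉ insert (m+2) (Finset.Icc 2 (m+1)) := by
    simp only [Finset.mem_insert, Finset.mem_Icc]
    omega
  have hnot2 : (m+2) ∉ Finset.Icc 2 (m+1) := by
    simp only [Finset.mem_Icc]
    omega
  rw [hsplit, Finset.sum_insert hnot1, Finset.sum_insert hnot2]
  have eS : (∑ k ∈ Finset.Icc 2 (m+1), N k) * 6 = m * F := by
    rw [Finset.sum_mul, Finset.sum_congr rfl e3, Finset.sum_const, Nat.card_Icc,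
      smul_eq_mul, (by omega : m + 1 + 1 - 2 = m)]
  have key : (N 1 + (N (m+2) + ∑ k ∈ Finset.Icc 2 (m+1), N k)) * 6 = F * (m + 2 + 4) := by
    calc (N 1 + (N (m+2) + ∑ k ∈ Finset.Icc 2 (m+1), N k)) * 6
        = (N 1 * 2) * 3 + ((N (m+2) * 2) * 3 + (∑ k ∈ Finset.Icc 2 (m+1), N k) * 6) := by
          ring
      _ = F * 3 + (F * 3 + m * F) := by rw [e1, e2, eS]
      _ = F * (m + 2 + 4) := by ring
  exact (Nat.div_eq_of_eq_mul_left (by norm_num) key.symm).symm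
end

section
/- The polynomials A_n(a,b;t) = Σ_k A_{a,b}(n,k) t^k defined by the recurrence A_{a,b}(n+1,k) = (a-1+k)·A_{a,b}(n,k) + (b+n+1-k)·A_{a,b}(n,k-1) with A_{a,b}(1,1) = 1 and A_{a,b}(1,k) = 0 for k ≠ 1, satisfy A_n(a,b;1) = (a+b)(a+b+1)···(a+b+n-2) for all n ≥ 2. -/
theorem stmt8 (a b : ℚ) (A : ℕ → ℕ → ℚ)
    (h11 : A 1 1 = 1)
    (h1k : ∀ k, k ≠ 1 → A 1 k = 0)
    (h0 : ∀ n, A n 0 = 0)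
    (hrec : ∀ n k, 1 ≤ n → 1 ≤ k →
      A (n + 1) k = (a - 1 + k) * A n k + (b + n + 1 - k) * A n (k - 1)) :
    ∀ n, 2 ≤ n →
      ∑ k ∈ Finset.range (n + 1), A n k =
        ∏ j ∈ Finset.range (n - 1), (a + b + j) := by
  have hz : ∀ m k, m + 1 < k → A (m + 1) k = 0 := by
    intro m
    induction m with
    | zero => intro k hk; exact h1k k (by omega)
    | succ p ih =>
      intro k hk
      rw [hrec (p + 1) k (by omega) (by omega), ih k (by omega), ih (k - 1) (by omega)]
      ring
  have hS : ∀ m, ∑ k ∈ Finset.range (m + 2), A (m + 1) k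
      = ∏ j ∈ Finset.range m, (a + b + j) := by
    intro m
    induction m with
    | zero => simp [Finset.sum_range_succ, h0, h11]
    | succ p ih =>
      rw [Finset.prod_range_succ, ← ih]
      have e1 : ∑ k ∈ Finset.range (p + 3), A (p + 2) k
          = ∑ k ∈ Finset.range (p + 2), A (p + 2) (k + 1) := by
        rw [Finset.sum_range_succ', h0, add_zero]
      rw [e1]
      have e2 : ∀ k ∈ Finset.range (p + 2), A (p + 2) (k + 1)
          = (a + k) * A (p + 1) (k + 1) + (b + (p + 1) - k) * A (p + 1) k := by
        intro k _
        rw [hrec (p + 1) (k + 1) (by omega) (by omega)]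
        simp only [Nat.add_sub_cancel]
        push_cast
        ring
      rw [Finset.sum_congr rfl e2, Finset.sum_add_distrib]
      have e3 : ∑ k ∈ Finset.range (p + 2), (a + k) * A (p + 1) (k + 1)
          = ∑ k ∈ Finset.range (p + 1), (a + k) * A (p + 1) (k + 1) := by
        rw [Finset.sum_range_succ, hz p (p + 2) (by omega)]
        ring
      have e4 : ∑ k ∈ Finset.range (p + 2), (b + (p + 1) - k) * A (p + 1) k
          = ∑ k ∈ Finset.range (p + 1), (b + p - k) * A (p + 1) (k + 1) := by
        rw [Finset.sum_range_succ', h0, mul_zero, add_zero]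
        apply Finset.sum_congr rfl
        intro k _
        push_cast
        ring
      rw [e3, e4, ← Finset.sum_add_distrib]
      have e5 : ∑ k ∈ Finset.range (p + 2), A (p + 1) k
          = ∑ k ∈ Finset.range (p + 1), A (p + 1) (k + 1) := by
        rw [Finset.sum_range_succ', h0, add_zero]
      rw [e5, Finset.sum_mul]
      apply Finset.sum_congr rfl
      intro k _
      ring
  intro n hn
  obtain ⟨m, rfl⟩ : ∃ m, n = m + 1 := ⟨n - 1, by omega⟩
  simpa using hS m
end

section
/- With A_n(t) = Σ_k A_{a,b}(n,k) t^k defined by the recurrence A_{a,b}(n+1,k) = (a-1+k)A_{a,b}(n,k) + (b+n+1-k)A_{a,b}(n,k-1) and A_1(t) = t, the derivative at t = 1 satisfies A_n'(1) = (a + bn + C(n,2) - 1) · (a+b)(a+b+1)···(a+b+n-3) for n ≥ 2. -/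
theorem stmt9 (a b : ℚ) (A : ℕ → ℕ → ℚ)
    (h11 : A 1 1 = 1)
    (h1k : ∀ k, k ≠ 1 → A 1 k = 0)
    (h0 : ∀ n, A n 0 = 0)
    (hrec : ∀ n k, 1 ≤ n → 1 ≤ k →
      A (n + 1) k = (a - 1 + k) * A n k + (b + n + 1 - k) * A n (k - 1)) :
    ∀ n, 2 ≤ n →
      ∑ k ∈ Finset.range (n + 1), (k : ℚ) * A n k =
        (a + b * n + (Nat.choose n 2 : ℚ) - 1) * ∏ j ∈ Finset.range (n - 2), (a + b + j) := by
  -- A n k vanishes for k > n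
  have hz : ∀ n, 1 ≤ n → ∀ k, n < k → A n k = 0 := by
    intro n
    induction n with
    | zero => intro h; omega
    | succ n ih =>
      intro _ k hk
      rcases Nat.eq_zero_or_pos n with h | h
      · subst h
        exact h1k k (by omega)
      · rw [hrec n k h (by omega), ih h k (by omega), ih h (k - 1) (by omega)]
        ring
  -- generic reindexing of the recurrence
  have key : ∀ (f : ℕ → ℚ) (n : ℕ), 1 ≤ n →
      ∑ k ∈ Finset.range (n + 2), f k * A (n + 1) k
        = ∑ k ∈ Finset.range n,
            (f (k + 1) * (a + k) + f (k + 2) * (b + n - k - 1)) * A n (k + 1) := by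
    intro f n hn
    rw [Finset.sum_range_succ']
    rw [h0, mul_zero, add_zero]
    have hstep : ∀ k ∈ Finset.range (n + 1),
        f (k + 1) * A (n + 1) (k + 1)
          = f (k + 1) * (a + k) * A n (k + 1) + f (k + 1) * (b + n - k) * A n k := by
      intro k _
      rw [hrec n (k + 1) hn (by omega)]
      simp only [Nat.add_sub_cancel]
      push_cast
      ring
    rw [Finset.sum_congr rfl hstep, Finset.sum_add_distrib]
    rw [Finset.sum_range_succ (fun k => f (k + 1) * (a + k) * A n (k + 1))]
    rw [hz n hn (n + 1) (by omega), mul_zero, add_zero]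
    rw [Finset.sum_range_succ' (fun k => f (k + 1) * (b + n - k) * A n k)]
    rw [h0, mul_zero, add_zero]
    rw [← Finset.sum_add_distrib]
    refine Finset.sum_congr rfl ?_
    intro k _
    push_cast
    ring
  -- value of the total sum
  have hS : ∀ n, 1 ≤ n →
      ∑ k ∈ Finset.range (n + 1), A n k = ∏ j ∈ Finset.range (n - 1), (a + b + j) := by
    intro n
    induction n with
    | zero => intro h; omega
    | succ n ih =>
      intro _
      rcases Nat.eq_zero_or_pos n with h | h
      · subst h
        simp [Finset.sum_range_succ, h0, h11]
      · have k1 := key (fun _ => 1) n h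
        simp only [one_mul] at k1
        have : ∑ k ∈ Finset.range (n + 1 + 1), A (n + 1) k
            = ∑ k ∈ Finset.range n, (a + b + (n : ℚ) - 1) * A n (k + 1) := by
          rw [show n + 1 + 1 = n + 2 from rfl, k1]
          refine Finset.sum_congr rfl ?_
          intro k _; ring
        rw [this, ← Finset.mul_sum]
        have hsh : ∑ k ∈ Finset.range n, A n (k + 1)
            = ∑ k ∈ Finset.range (n + 1), A n k := by
          rw [Finset.sum_range_succ', h0, add_zero]
        rw [hsh, ih h]
        have h1 : n + 1 - 1 = (n - 1) + 1 := by omega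
        rw [h1, Finset.prod_range_succ]
        have hc : ((n - 1 : ℕ) : ℚ) = (n : ℚ) - 1 := by
          have : (1 : ℕ) ≤ n := h
          push_cast [Nat.cast_sub this]
          ring
        rw [hc]; ring
  -- main induction
  intro n hn
  induction n, hn using Nat.le_induction with
  | base =>
    have hA21 : A 2 1 = a := by
      rw [hrec 1 1 le_rfl le_rfl, h11, h0]
      push_cast; ring
    have hA22 : A 2 2 = b := by
      rw [hrec 1 2 le_rfl (by omega)]
      rw [h1k 2 (by omega), h11]
      push_cast; ring
    simp [Finset.sum_range_succ, h0, hA21, hA22]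
    ring
  | succ n hn ih =>
    have h1n : 1 ≤ n := by omega
    have kD := key (fun k => (k : ℚ)) n h1n
    have hsh1 : ∑ k ∈ Finset.range n, ((k : ℚ) + 1) * A n (k + 1)
        = ∑ k ∈ Finset.range (n + 1), (k : ℚ) * A n k := by
      rw [Finset.sum_range_succ' (fun k => (k : ℚ) * A n k)]
      rw [h0, mul_zero, add_zero]
      refine Finset.sum_congr rfl ?_
      intro k _; push_cast; ring
    have hsh2 : ∑ k ∈ Finset.range n, A n (k + 1)
        = ∑ k ∈ Finset.range (n + 1), A n k := by
      rw [Finset.sum_range_succ', h0, add_zero]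
    have hD : ∑ k ∈ Finset.range (n + 1 + 1), (k : ℚ) * A (n + 1) k
        = (a + b + n - 2) * ∑ k ∈ Finset.range (n + 1), (k : ℚ) * A n k
          + (b + n) * ∑ k ∈ Finset.range (n + 1), A n k := by
      rw [show n + 1 + 1 = n + 2 from rfl, kD]
      rw [← hsh1, ← hsh2, Finset.mul_sum, Finset.mul_sum, ← Finset.sum_add_distrib]
      refine Finset.sum_congr rfl ?_
      intro k _
      push_cast
      ring
    rw [hD, ih, hS n h1n]
    -- products
    have hp1 : n - 1 = (n - 2) + 1 := by omega
    have hp2 : (n + 1) - 2 = (n - 2) + 1 := by omega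
    rw [hp1, hp2, Finset.prod_range_succ]
    have hc2 : ((n - 2 : ℕ) : ℚ) = (n : ℚ) - 2 := by
      have h2 : (2 : ℕ) ≤ n := hn
      push_cast [Nat.cast_sub h2]
      ring
    have hch : ((n + 1).choose 2 : ℚ) = (n.choose 2 : ℚ) + n := by
      rw [Nat.choose_succ_succ]
      push_cast [Nat.choose_one_right]
      ring
    rw [hc2, hch]
    push_cast
    ring
end

section
/- For n ≥ 2, the number of permutations of {1,...,n} containing the consecutive pattern (i, i+1, x) at adjacent positions where x < i+1 (i.e., positions t, t+1, t+2 with π(t) = i, π(t+1) = i+1, π(t+2) < i+1, using convention π(n+1) = n+1) equals (i-1)·(n-2)!, for each fixed 1 ≤ i ≤ n-1. -/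
lemma pval_eq (n : ℕ) (π : Equiv.Perm (Fin n)) (k : ℕ) (h1 : k - 1 < n) (h2 : 1 ≤ k) :
    pval n π k = ((π ⟨k - 1, h1⟩ : Fin n) : ℕ) + 1 := dif_pos ⟨h1, h2⟩

lemma pval_eq' (n : ℕ) (π : Equiv.Perm (Fin n)) (k : ℕ) (h : ¬(k - 1 < n ∧ 1 ≤ k)) :
    pval n π k = n + 1 := dif_neg h

lemma card_fix (n : ℕ) (a c e : Fin n) (hac : a ≠ c) (hae : a ≠ e) (hce : c ≠ e) :
    Nat.card {σ : Equiv.Perm (Fin n) // σ a = a ∧ σ c = c ∧ σ e = e} =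
      Nat.factorial (n - 3) := by
  classical
  have e1 : {σ : Equiv.Perm (Fin n) // σ a = a ∧ σ c = c ∧ σ e = e} ≃
      {σ : Equiv.Perm (Fin n) // ∀ y, ¬(y ≠ a ∧ y ≠ c ∧ y ≠ e) → σ y = y} :=
    Equiv.subtypeEquivRight (by
      intro σ
      constructor
      · rintro ⟨h1, h2, h3⟩ y hy
        by_cases hya : y = a
        · subst hya; exact h1
        by_cases hyc : y = c
        · subst hyc; exact h2
        by_cases hye : y = e
        · subst hye; exact h3
        exact absurd ⟨hya, hyc, hye⟩ hy
      · intro h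
        exact ⟨h a (by simp), h c (by simp), h e (by simp)⟩)
  have e2 := (Equiv.Perm.subtypeEquivSubtypePerm
      (p := fun y : Fin n => y ≠ a ∧ y ≠ c ∧ y ≠ e))
  rw [Nat.card_congr (e1.trans e2.symm), Nat.card_eq_fintype_card, Fintype.card_perm]
  congr 1
  rw [Fintype.card_subtype]
  have hfe : Finset.univ.filter (fun y : Fin n => y ≠ a ∧ y ≠ c ∧ y ≠ e) =
      ({a, c, e} : Finset (Fin n))ᶜ := by
    ext y; simp [not_or]
  rw [hfe, Finset.card_compl, Fintype.card_fin]
  congr 1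
  rw [Finset.card_insert_of_notMem (by simp [hac, hae]),
      Finset.card_insert_of_notMem (by simp [hce]), Finset.card_singleton]

lemma card_three (n : ℕ) (a c e b d f : Fin n) (hac : a ≠ c) (hae : a ≠ e) (hce : c ≠ e)
    (hbd : b ≠ d) (hbf : b ≠ f) (hdf : d ≠ f) :
    (Finset.univ.filter
        (fun π : Equiv.Perm (Fin n) => π a = b ∧ π c = d ∧ π e = f)).card =
      Nat.factorial (n - 3) := by
  classical
  set τ₁ := Equiv.swap a b with hτ₁
  set τ₂ := Equiv.swap (τ₁ c) d with hτ₂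
  set τ₃ := Equiv.swap (τ₂ (τ₁ e)) f with hτ₃
  set π₀ := τ₃ * τ₂ * τ₁ with hπ₀
  have h1a : τ₁ a = b := Equiv.swap_apply_left a b
  have hbne : b ≠ τ₁ c := by
    rw [← h1a]; exact fun h => hac (τ₁.injective h)
  have h2b : τ₂ b = b := Equiv.swap_apply_of_ne_of_ne hbne hbd
  have h21a : τ₂ (τ₁ a) = b := by rw [h1a, h2b]
  have h21c : τ₂ (τ₁ c) = d := Equiv.swap_apply_left _ _
  have hbne2 : b ≠ τ₂ (τ₁ e) := by
    rw [← h21a]; exact fun h => hae (τ₁.injective (τ₂.injective h))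
  have h3b : τ₃ b = b := Equiv.swap_apply_of_ne_of_ne hbne2 hbf
  have hdne : d ≠ τ₂ (τ₁ e) := by
    rw [← h21c]; exact fun h => hce (τ₁.injective (τ₂.injective h))
  have h3d : τ₃ d = d := Equiv.swap_apply_of_ne_of_ne hdne hdf
  have hπa : π₀ a = b := by
    simp only [hπ₀, Equiv.Perm.mul_apply, h1a, h2b, h3b]
  have hπc : π₀ c = d := by
    simp only [hπ₀, Equiv.Perm.mul_apply, h21c, h3d]
  have hπe : π₀ e = f := by
    simp only [hπ₀, Equiv.Perm.mul_apply]
    exact Equiv.swap_apply_left _ _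
  rw [← Fintype.card_subtype, ← Nat.card_eq_fintype_card]
  have eq1 : {π : Equiv.Perm (Fin n) // π a = b ∧ π c = d ∧ π e = f} ≃
      {σ : Equiv.Perm (Fin n) // σ a = a ∧ σ c = c ∧ σ e = e} := by
    refine Equiv.subtypeEquiv (Equiv.mulLeft π₀⁻¹) ?_
    intro π
    simp only [Equiv.coe_mulLeft, Equiv.Perm.mul_apply]
    constructor
    · rintro ⟨u, v, w⟩
      refine ⟨?_, ?_, ?_⟩
      · rw [u, ← hπa]; simp
      · rw [v, ← hπc]; simp
      · rw [w, ← hπe]; simp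
    · rintro ⟨u, v, w⟩
      refine ⟨?_, ?_, ?_⟩
      · have := congrArg π₀ u; simpa [hπa] using this
      · have := congrArg π₀ v; simpa [hπc] using this
      · have := congrArg π₀ w; simpa [hπe] using this
  rw [Nat.card_congr eq1]
  exact card_fix n a c e hac hae hce

theorem stmt19 (n i : ℕ) (hn : 2 ≤ n) (hi1 : 1 ≤ i) (hi2 : i ≤ n - 1) :
    Nat.card {π : Equiv.Perm (Fin n) //
      ∃ t, 1 ≤ t ∧ t + 1 ≤ n ∧ pval n π t = i ∧ pval n π (t + 1) = i + 1 ∧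
        pval n π (t + 2) < i + 1} =
    (i - 1) * Nat.factorial (n - 2) := by
  classical
  have hin : i - 1 < n := by omega
  have hin2 : i < n := by omega
  have hPQ : ∀ π : Equiv.Perm (Fin n),
      (∃ t, 1 ≤ t ∧ t + 1 ≤ n ∧ pval n π t = i ∧ pval n π (t + 1) = i + 1 ∧
        pval n π (t + 2) < i + 1)
      ↔ (∃ q : Fin (n - 2) × Fin (i - 1),
          ((π ⟨q.1.1, by have := q.1.2; omega⟩ : Fin n) : ℕ) = i - 1 ∧
          ((π ⟨q.1.1 + 1, by have := q.1.2; omega⟩ : Fin n) : ℕ) = i ∧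
          ((π ⟨q.1.1 + 2, by have := q.1.2; omega⟩ : Fin n) : ℕ) = q.2.1) := by
    intro π
    constructor
    · rintro ⟨t, ht1, ht2, hA, hB, hC⟩
      obtain ⟨s, rfl⟩ : ∃ s, t = s + 1 := ⟨t - 1, by omega⟩
      have hsn : s < n := by omega
      have hsn1 : s + 1 < n := by omega
      have hA' : ((π ⟨s, hsn⟩ : Fin n) : ℕ) + 1 = i := by
        have := pval_eq n π (s + 1) (by omega) (by omega)
        rw [hA] at this; exact this.symm
      have hB' : ((π ⟨s + 1, hsn1⟩ : Fin n) : ℕ) + 1 = i + 1 := by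
        have := pval_eq n π (s + 1 + 1) (by omega) (by omega)
        rw [hB] at this; exact this.symm
      by_cases hs : s + 2 < n
      · have hC' : ((π ⟨s + 2, hs⟩ : Fin n) : ℕ) + 1 < i + 1 := by
          have := pval_eq n π (s + 1 + 2) (by omega) (by omega)
          rw [this] at hC; exact hC
        have hx : ((π ⟨s + 2, hs⟩ : Fin n) : ℕ) < i := by omega
        have hxne : ((π ⟨s + 2, hs⟩ : Fin n) : ℕ) ≠ i - 1 := by
          intro hcon
          have hsv : ((π ⟨s, hsn⟩ : Fin n) : ℕ) = i - 1 := by omega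
          have heq : (π ⟨s + 2, hs⟩ : Fin n) = π ⟨s, hsn⟩ := Fin.ext (by rw [hcon, hsv])
          have := congrArg Fin.val (π.injective heq)
          simp at this
        refine ⟨(⟨s, by omega⟩, ⟨(π ⟨s + 2, hs⟩ : Fin n), by omega⟩), ?_, ?_, rfl⟩
        · show ((π ⟨s, hsn⟩ : Fin n) : ℕ) = i - 1
          omega
        · show ((π ⟨s + 1, hsn1⟩ : Fin n) : ℕ) = i
          omega
      · have hC' : (n : ℕ) + 1 < i + 1 := by
          have := pval_eq' n π (s + 1 + 2) (by omega)
          rw [this] at hC; exact hC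
        omega
    · rintro ⟨q, h1, h2, h3⟩
      have hq1 := q.1.2
      have hq2 := q.2.2
      refine ⟨q.1.1 + 1, by omega, by omega, ?_, ?_, ?_⟩
      · rw [pval_eq n π (q.1.1 + 1) (by omega) (by omega)]
        have h1' : ((π ⟨q.1.1 + 1 - 1, (by omega : q.1.1 + 1 - 1 < n)⟩ : Fin n) : ℕ) = i - 1 := h1
        omega
      · rw [pval_eq n π (q.1.1 + 1 + 1) (by omega) (by omega)]
        have h2' : ((π ⟨q.1.1 + 1 + 1 - 1, (by omega : q.1.1 + 1 + 1 - 1 < n)⟩ : Fin n) : ℕ) = i := h2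
        omega
      · rw [pval_eq n π (q.1.1 + 1 + 2) (by omega) (by omega)]
        have h3' : ((π ⟨q.1.1 + 1 + 2 - 1, (by omega : q.1.1 + 1 + 2 - 1 < n)⟩ : Fin n) : ℕ) = q.2.1 := h3
        omega
  rw [Nat.card_eq_fintype_card, Fintype.card_congr (Equiv.subtypeEquivRight hPQ),
    Fintype.card_subtype]
  have hmk : ∀ q : Fin (n - 2) × Fin (i - 1), q.1.1 + 2 < n := fun q => by
    have := q.1.2; omega
  set A : Fin (n - 2) × Fin (i - 1) → Finset (Equiv.Perm (Fin n)) := fun q =>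
    Finset.univ.filter (fun π : Equiv.Perm (Fin n) =>
      π ⟨q.1.1, by have := hmk q; omega⟩ = ⟨i - 1, hin⟩ ∧
      π ⟨q.1.1 + 1, by have := hmk q; omega⟩ = ⟨i, hin2⟩ ∧
      π ⟨q.1.1 + 2, hmk q⟩ = ⟨q.2.1, by have := q.2.2; omega⟩) with hAdef
  have hunion : (Finset.univ.filter (fun π : Equiv.Perm (Fin n) =>
      ∃ q : Fin (n - 2) × Fin (i - 1),
          ((π ⟨q.1.1, by have := q.1.2; omega⟩ : Fin n) : ℕ) = i - 1 ∧
          ((π ⟨q.1.1 + 1, by have := q.1.2; omega⟩ : Fin n) : ℕ) = i ∧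
          ((π ⟨q.1.1 + 2, by have := q.1.2; omega⟩ : Fin n) : ℕ) = q.2.1)) =
      Finset.univ.biUnion A := by
    ext π
    simp only [Finset.mem_filter, Finset.mem_biUnion, Finset.mem_univ, true_and, hAdef]
    constructor
    · rintro ⟨q, h1, h2, h3⟩
      exact ⟨q, Fin.ext h1, Fin.ext h2, Fin.ext h3⟩
    · rintro ⟨q, h1, h2, h3⟩
      exact ⟨q, congrArg Fin.val h1, congrArg Fin.val h2, congrArg Fin.val h3⟩
  rw [hunion, Finset.card_biUnion]
  · have hcard : ∀ q : Fin (n - 2) × Fin (i - 1), (A q).card = Nat.factorial (n - 3) := by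
      intro q
      have hq2 := q.2.2
      refine card_three n _ _ _ _ _ _ ?_ ?_ ?_ ?_ ?_ ?_
      · exact fun h => by have := congrArg Fin.val h; simp at this
      · exact fun h => by have := congrArg Fin.val h; simp at this
      · exact fun h => by have := congrArg Fin.val h; simp at this
      · exact fun h => by have := congrArg Fin.val h; simp at this; omega
      · exact fun h => by have := congrArg Fin.val h; simp at this; omega
      · exact fun h => by have := congrArg Fin.val h; simp at this; omega
    rw [Finset.sum_congr rfl (fun q _ => hcard q), Finset.sum_const, Finset.card_univ,
      Fintype.card_prod, Fintype.card_fin, Fintype.card_fin, smul_eq_mul]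
    by_cases hione : i = 1
    · subst hione; simp
    · have h3 : 3 ≤ n := by omega
      have : n - 2 = (n - 3) + 1 := by omega
      rw [this, Nat.factorial_succ]
      have : n - 3 + 1 = n - 2 := by omega
      rw [this]
      ring
  · intro q _ q' _ hqq'
    rw [Function.onFun, Finset.disjoint_left]
    intro π hπ hπ'
    simp only [hAdef, Finset.mem_filter, Finset.mem_univ, true_and] at hπ hπ'
    obtain ⟨h1, h2, h3⟩ := hπ
    obtain ⟨h1', h2', h3'⟩ := hπ'
    apply hqq'
    have hpos : q.1.1 = q'.1.1 := by
      have := π.injective (h1.trans h1'.symm)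
      simpa using this
    have hval : q.2.1 = q'.2.1 := by
      have hposf : (⟨q.1.1 + 2, hmk q⟩ : Fin n) = ⟨q'.1.1 + 2, hmk q'⟩ := Fin.ext (by simp [hpos])
      rw [hposf] at h3
      have := h3.symm.trans h3'
      simpa using this
    exact Prod.ext (Fin.ext hpos) (Fin.ext hval)
end
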